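/- arXiv:1411.3877 — 3 statements merged into one kernel-verified Lean document; each statement's English description precedes it below -/
import Mathlib

section
/- Let ρ be a finite-dimensional complex representation of SL₂(ℤ) with finite index kernel, M a positive integer, and k ∈ ℤ. If f ∈ M_k(ρ), then T_M f := Σ_{m∈Δ_M} (f|_k m) ⊗ 𝔢_m is a modular form of weight k and type T_M ρ, i.e. T_M f ∈ M_k(T_M ρ). -/
open scoped MatrixGroups Manifold Kronecker ComplexConjugate Classical ComplexOrder
open Matrix UpperHalfPlane Complex Filter MeasureTheory CongruenceSubgroup

noncomputable section

namespace VVMF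

abbrev GL2ℤ := Matrix (Fin 2) (Fin 2) ℤ

/-- The automorphy factor `c τ + d` for `γ ∈ SL(2,ℤ)`. -/
def denomZ (γ : SL(2, ℤ)) (τ : ℍ) : ℂ :=
  ((γ 1 0 : ℤ) : ℂ) * (τ : ℂ) + ((γ 1 1 : ℤ) : ℂ)

/-- `ρ` is a (matrix) representation of `SL(2,ℤ)`. -/
def IsRep {ι : Type*} [Fintype ι] (ρ : SL(2, ℤ) → Matrix ι ι ℂ) : Prop :=
  ρ 1 = 1 ∧ ∀ γ δ : SL(2, ℤ), ρ (γ * δ) = ρ γ * ρ δ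

/-- The weight-`k` slash action `f ∣_{k,ρ} γ` on vector-valued functions. -/
def vslash {ι : Type*} [Fintype ι] (k : ℤ) (ρ : SL(2, ℤ) → Matrix ι ι ℂ)
    (γ : SL(2, ℤ)) (f : ℍ → ι → ℂ) : ℍ → ι → ℂ :=
  fun τ => (denomZ γ τ) ^ (-k) • (ρ γ⁻¹).mulVec (f (γ • τ))

/-- Vector-valued modular form of weight `k` and type `ρ`: holomorphic,
slash-invariant, with all components (equivalently, all functionals) bounded
towards `i∞`. -/
def IsVModForm {ι : Type*} [Fintype ι] (k : ℤ) (ρ : SL(2, ℤ) → Matrix ι ι ℂ)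
    (f : ℍ → ι → ℂ) : Prop :=
  (∀ i, MDifferentiable 𝓘(ℂ) 𝓘(ℂ) (fun τ : ℍ => f τ i)) ∧
  (∀ γ : SL(2, ℤ), vslash k ρ γ f = f) ∧
  (∀ i, IsBoundedAtImInfty (fun τ : ℍ => f τ i))

/-- Vector-valued cusp form. -/
def IsVCuspForm {ι : Type*} [Fintype ι] (k : ℤ) (ρ : SL(2, ℤ) → Matrix ι ι ℂ)
    (f : ℍ → ι → ℂ) : Prop :=
  (∀ i, MDifferentiable 𝓘(ℂ) 𝓘(ℂ) (fun τ : ℍ => f τ i)) ∧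
  (∀ γ : SL(2, ℤ), vslash k ρ γ f = f) ∧
  (∀ i, IsZeroAtImInfty (fun τ : ℍ => f τ i))

/-- The space `M_k(ρ)` of modular forms of weight `k` and type `ρ`. -/
def Mk {ι : Type*} [Fintype ι] (k : ℤ) (ρ : SL(2, ℤ) → Matrix ι ι ℂ) :
    Set (ℍ → ι → ℂ) := {f | IsVModForm k ρ f}

/-- The trivial one-dimensional representation `𝟙` of `SL(2,ℤ)`. -/
def oneRep : SL(2, ℤ) → Matrix Unit Unit ℂ := fun _ => 1

/-- The scalar slash action on ℂ-valued functions. -/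
def cslash (k : ℤ) (γ : SL(2, ℤ)) (f : ℍ → ℂ) : ℍ → ℂ :=
  fun τ => (denomZ γ τ) ^ (-k) * f (γ • τ)

/-- A Dirichlet character mod `N` evaluated on the lower right entry `d(γ)`. -/
def dirSL {N : ℕ} (χ : DirichletCharacter ℂ N) (γ : SL(2, ℤ)) : ℂ :=
  χ (((γ 1 1 : ℤ) : ZMod N))

/-- Classical modular form of weight `k` for `Γ₀(N)` and Dirichlet character `χ`. -/
def IsModFormChi {N : ℕ} (k : ℤ) (χ : DirichletCharacter ℂ N) (f : ℍ → ℂ) : Prop :=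
  MDifferentiable 𝓘(ℂ) 𝓘(ℂ) f ∧
  (∀ γ ∈ Gamma0 N, (fun τ => dirSL χ γ⁻¹ * cslash k γ f τ) = f) ∧
  (∀ γ : SL(2, ℤ), IsBoundedAtImInfty (cslash k γ f))

/-- Classical cusp form of weight `k` for `Γ₀(N)` and Dirichlet character `χ`. -/
def IsCuspFormChi {N : ℕ} (k : ℤ) (χ : DirichletCharacter ℂ N) (f : ℍ → ℂ) : Prop :=
  MDifferentiable 𝓘(ℂ) 𝓘(ℂ) f ∧
  (∀ γ ∈ Gamma0 N, (fun τ => dirSL χ γ⁻¹ * cslash k γ f τ) = f) ∧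
  (∀ γ : SL(2, ℤ), IsZeroAtImInfty (cslash k γ f))

/-! ### The sets `Δ_M` and vector-valued Hecke operators -/

/-- Membership in `Δ_M`: upper triangular, positive diagonal (automatic for `M > 0`),
determinant `M`, and `0 ≤ b < d`. -/
def DeltaPred (M : ℕ) (m : GL2ℤ) : Prop :=
  m 1 0 = 0 ∧ 0 < m 0 0 ∧ m 0 0 * m 1 1 = (M : ℤ) ∧ 0 ≤ m 0 1 ∧ m 0 1 < m 1 1

/-- The set `Δ_M` of upper triangular matrices `(a b; 0 d)`, `a d = M`, `0 ≤ b < d`. -/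
def Delta (M : ℕ) : Type := {m : GL2ℤ // DeltaPred M m}

instance (M : ℕ) : Finite (Delta M) := by
  have key : ∀ m : Delta M, m.1 0 0 ≤ (M : ℤ) ∧ m.1 0 1 ≤ (M : ℤ) ∧ m.1 1 1 ≤ (M : ℤ) := by
    rintro ⟨m, hc, ha, hdet, hb0, hbd⟩
    have hd : 1 ≤ m 1 1 := by nlinarith
    have ha' : 1 ≤ m 0 0 := ha
    refine ⟨?_, ?_, ?_⟩ <;> nlinarith
  refine Finite.of_injective
    (fun m : Delta M => ((⟨(m.1 0 0).toNat, ?_⟩ : Fin (M+1)), (⟨(m.1 0 1).toNat, ?_⟩ : Fin (M+1)),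
      (⟨(m.1 1 1).toNat, ?_⟩ : Fin (M+1)))) ?_
  · have := key m; omega
  · have := key m; omega
  · have := key m; omega
  · intro m m' h
    have h1 := congrArg (fun p => (p.1 : Fin (M+1)).val) h
    have h2 := congrArg (fun p => (p.2.1 : Fin (M+1)).val) h
    have h3 := congrArg (fun p => (p.2.2 : Fin (M+1)).val) h
    simp only at h1 h2 h3
    have e1 : m.1 0 0 = m'.1 0 0 := by
      have p1 := m.2.2.1; have p2 := m'.2.2.1
      omega
    have e2 : m.1 0 1 = m'.1 0 1 := by
      have p1 := m.2.2.2.2.1; have p2 := m'.2.2.2.2.1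
      omega
    have e3 : m.1 1 1 = m'.1 1 1 := by
      have p1 := m.2.2.2.2.1; have p2 := m'.2.2.2.2.1
      have q1 := m.2.2.2.2.2; have q2 := m'.2.2.2.2.2
      omega
    apply Subtype.ext
    ext i j
    fin_cases i <;> fin_cases j
    · exact e1
    · exact e2
    · show m.1 1 0 = m'.1 1 0
      rw [m.2.1, m'.2.1]
    · exact e3

instance (M : ℕ) : Fintype (Delta M) := Fintype.ofFinite _

/-- `HeckeData M bar coc` asserts that for every `m ∈ Δ_M` and `γ ∈ SL(2,ℤ)` we have
`m γ = I_m(γ) · overline{m γ}` with `overline{m γ} = bar m γ ∈ Δ_M` and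
`I_m(γ) = coc m γ ∈ SL(2,ℤ)`. -/
def HeckeData (M : ℕ) (bar : Delta M → SL(2, ℤ) → Delta M)
    (coc : Delta M → SL(2, ℤ) → SL(2, ℤ)) : Prop :=
  ∀ (m : Delta M) (γ : SL(2, ℤ)),
    ((coc m γ : SL(2, ℤ)) : GL2ℤ) * (bar m γ).1 = m.1 * (γ : GL2ℤ)

/-- The representation `T_M ρ` on `V(ρ) ⊗ ℂ[Δ_M]` (coordinates `ι × Δ_M`):
`(T_M ρ)(γ) (v ⊗ 𝔢_m) = ρ(I_m(γ⁻¹)⁻¹) v ⊗ 𝔢_{m·γ⁻¹}`. -/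
def heckeRep {ι : Type*} (M : ℕ) (ρ : SL(2, ℤ) → Matrix ι ι ℂ)
    (bar : Delta M → SL(2, ℤ) → Delta M) (coc : Delta M → SL(2, ℤ) → SL(2, ℤ)) :
    SL(2, ℤ) → Matrix (ι × Delta M) (ι × Delta M) ℂ :=
  fun γ p q => if p.2 = bar q.2 γ⁻¹ then ρ ((coc q.2 γ⁻¹)⁻¹) p.1 q.1 else 0

/-- Möbius action of an upper triangular integer matrix `(a b; 0 d)` (with
`(aτ+b)/d ∈ ℍ`, as is the case for `m ∈ Δ_M`) on `ℍ`. -/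
def utAct (m : GL2ℤ) (τ : ℍ) : ℍ :=
  if h : 0 < ((((m 0 0 : ℤ) : ℂ) * (τ : ℂ) + ((m 0 1 : ℤ) : ℂ)) / ((m 1 1 : ℤ) : ℂ)).im
  then ⟨_, h⟩ else τ

/-- The slash `(f ∣_k m)(τ) = (a/d)^{k/2} f((aτ+b)/d)` for `m = (a b; 0 d)`. -/
def mslash {ι : Type*} (k : ℤ) (m : GL2ℤ) (f : ℍ → ι → ℂ) : ℍ → ι → ℂ :=
  fun τ => (((((m 0 0 : ℤ) : ℝ) / ((m 1 1 : ℤ) : ℝ)) ^ ((k : ℝ) / 2) : ℝ) : ℂ) • f (utAct m τ)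

/-- The vector-valued Hecke operator on forms:
`T_M f = ∑_{m ∈ Δ_M} (f ∣_k m) ⊗ 𝔢_m`. -/
def heckeT {ι : Type*} (M : ℕ) (k : ℤ) (f : ℍ → ι → ℂ) : ℍ → (ι × Delta M) → ℂ :=
  fun τ p => mslash k p.2.1 f τ p.1

/-- Tensor product of vector-valued functions, `(f ⊗ g)(τ) = f(τ) ⊗ g(τ)`. -/
def tensorF {α β : Type*} (f : ℍ → α → ℂ) (g : ℍ → β → ℂ) : ℍ → α × β → ℂ :=
  fun τ p => f τ p.1 * g τ p.2

/-! ### Right cosets and induced representations -/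

/-- The set of right cosets `Γ\SL(2,ℤ)`. -/
def Cos (Γ : Subgroup SL(2, ℤ)) : Type := Quotient (QuotientGroup.rightRel Γ)

/-- The coset `Γ γ`. -/
def mkCos (Γ : Subgroup SL(2, ℤ)) (γ : SL(2, ℤ)) : Cos Γ :=
  Quotient.mk (QuotientGroup.rightRel Γ) γ

/-- Right translation of right cosets: `Γγ ↦ Γγδ`. -/
def cosMul (Γ : Subgroup SL(2, ℤ)) (c : Cos Γ) (δ : SL(2, ℤ)) : Cos Γ :=
  Quotient.map' (· * δ) (by
    intro a b h
    rw [QuotientGroup.rightRel_apply] at h ⊢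
    simpa [mul_assoc] using h) c

/-- `IsSection Γ sec` says `sec` picks a representative in each right coset of `Γ`,
with the identity coset represented by `1` (i.e. `1 ∈ B`). -/
def IsSection (Γ : Subgroup SL(2, ℤ)) (sec : Cos Γ → SL(2, ℤ)) : Prop :=
  (∀ c, mkCos Γ (sec c) = c) ∧ sec (mkCos Γ 1) = 1

/-- The cocycle `I_β(δ) ∈ Γ` of the chosen system of representatives:
`β δ = I_β(δ) · overline{β δ}`, extended to all of `SL(2,ℤ)` by `I_β = I_{overline β}`. -/
def indCoc (Γ : Subgroup SL(2, ℤ)) (sec : Cos Γ → SL(2, ℤ)) (c : Cos Γ)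
    (δ : SL(2, ℤ)) : SL(2, ℤ) :=
  sec c * δ * (sec (cosMul Γ c δ))⁻¹

/-- The induced representation `Ind_Γ χ` on `ℂ[Γ\SL(2,ℤ)]`, for a character given as
a function `χf : SL(2,ℤ) → ℂ` (evaluated only on elements of `Γ`):
`(Ind_Γ χ)(γ) 𝔢_β = χ(I_β(γ⁻¹)⁻¹) 𝔢_{β·γ⁻¹}`. -/
def indRep (Γ : Subgroup SL(2, ℤ)) (sec : Cos Γ → SL(2, ℤ)) (χf : SL(2, ℤ) → ℂ) :
    SL(2, ℤ) → Matrix (Cos Γ) (Cos Γ) ℂ :=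
  fun γ c c' => if c = cosMul Γ c' γ⁻¹ then χf ((indCoc Γ sec c' γ⁻¹)⁻¹) else 0

/-- The induced representation `Ind_Γ 𝟙` (a permutation representation). -/
def permRep (Γ : Subgroup SL(2, ℤ)) : SL(2, ℤ) → Matrix (Cos Γ) (Cos Γ) ℂ :=
  fun γ c c' => if c = cosMul Γ c' γ⁻¹ then 1 else 0

/-- The induction map on modular forms, `Ind f = ∑_γ (f ∣_k γ) 𝔢_γ`. -/
def indForm (Γ : Subgroup SL(2, ℤ)) (sec : Cos Γ → SL(2, ℤ)) (k : ℤ) (f : ℍ → ℂ) :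
    ℍ → Cos Γ → ℂ :=
  fun τ c => cslash k (sec c) f τ

/-- The pointwise pairing `⟨f, v⟩ : τ ↦ ⟨f(τ), v⟩` with respect to the scalar
product making the standard basis orthonormal. -/
def pairF {α : Type*} [Fintype α] (f : ℍ → α → ℂ) (v : α → ℂ) : ℍ → ℂ :=
  fun τ => ∑ a, f τ a * conj (v a)

/-! ### Eisenstein series -/

/-- The matrix `T = (1 1; 0 1)`. -/
def Tmat : SL(2, ℤ) := ⟨!![1, 1; 0, 1], by norm_num [Matrix.det_fin_two_of]⟩

/-- The relation whose classes are the right cosets `Γ_∞(v) γ` of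
`Γ_∞(v) = {γ ∈ Γ_∞ : ρ(γ) v = v}`. -/
def eisRel {ι : Type*} [Fintype ι] (ρ : SL(2, ℤ) → Matrix ι ι ℂ) (v : ι → ℂ)
    (a b : SL(2, ℤ)) : Prop :=
  ((b * a⁻¹ : SL(2, ℤ)) 1 0 : ℤ) = 0 ∧ (ρ (b * a⁻¹)).mulVec v = v

/-- The index `[Γ_∞ : Γ_∞(v)]`. -/
def eisIndex {ι : Type*} [Fintype ι] (ρ : SL(2, ℤ) → Matrix ι ι ℂ) (v : ι → ℂ) : ℕ :=
  Nat.card (Quotient (Relation.EqvGen.setoid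
    (fun a b : {g : SL(2, ℤ) // (g 1 0 : ℤ) = 0} => eisRel ρ v a.1 b.1)))

/-- The Eisenstein series
`E_{k,v} = [Γ_∞ : Γ_∞(v)]⁻¹ ∑_{γ ∈ Γ_∞(v)\SL(2,ℤ)} v ∣_{k,ρ} γ` (for `k > 2`). -/
def eisSeries {ι : Type*} [Fintype ι] (k : ℤ) (ρ : SL(2, ℤ) → Matrix ι ι ℂ)
    (v : ι → ℂ) : ℍ → ι → ℂ :=
  fun τ => ((eisIndex ρ v : ℂ))⁻¹ •
    ∑' c : Quotient (Relation.EqvGen.setoid (eisRel ρ v)),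
      vslash k ρ (Quotient.out c) (fun _ => v) τ

/-- The Eisenstein series defined via the Hecke trick,
`E_{k,v} = [Γ_∞ : Γ_∞(v)]⁻¹ lim_{s→0} ∑_{γ ∈ Γ_∞(v)\SL(2,ℤ)} y^s v ∣_{k,ρ} γ`. -/
def eisSeriesH {ι : Type*} [Fintype ι] (k : ℤ) (ρ : SL(2, ℤ) → Matrix ι ι ℂ)
    (v : ι → ℂ) : ℍ → ι → ℂ :=
  fun τ => limUnder (nhdsWithin (0 : ℝ) (Set.Ioi 0)) (fun s : ℝ =>
    ((eisIndex ρ v : ℂ))⁻¹ •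
      ∑' c : Quotient (Relation.EqvGen.setoid (eisRel ρ v)),
        ((((Quotient.out c • τ : ℍ).im) ^ s : ℝ) : ℂ) •
          vslash k ρ (Quotient.out c) (fun _ => v) τ)

/-- The Eisenstein space `E_k(ρ) = span{E_{k,v} : v ∈ V(ρ)}` (for `k > 2`). -/
def Ek {ι : Type*} [Fintype ι] (k : ℤ) (ρ : SL(2, ℤ) → Matrix ι ι ℂ) :
    Submodule ℂ (ℍ → ι → ℂ) :=
  Submodule.span ℂ {f | ∃ v : ι → ℂ, f = eisSeries k ρ v}

/-- The submodule of `SL(2,ℤ)`-invariant vectors (the isotrivial component `ρ(𝟙)`). -/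
def invariants {ι : Type*} [Fintype ι] (ρ : SL(2, ℤ) → Matrix ι ι ℂ) :
    Submodule ℂ (ι → ℂ) where
  carrier := {v | ∀ γ, (ρ γ).mulVec v = v}
  add_mem' := by
    intro a b ha hb γ
    rw [Matrix.mulVec_add, ha, hb]
  zero_mem' := by
    intro γ
    simp [Matrix.mulVec_zero]
  smul_mem' := by
    intro c a ha γ
    rw [Matrix.mulVec_smul, ha]

/-- The subspace `V(ρ)(1)_T = {v : ρ(T) v = v}` of `T`-fixed vectors. -/
def fixedT {ι : Type*} [Fintype ι] (ρ : SL(2, ℤ) → Matrix ι ι ℂ) :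
    Submodule ℂ (ι → ℂ) where
  carrier := {v | (ρ Tmat).mulVec v = v}
  add_mem' := by
    intro a b ha hb
    show (ρ Tmat).mulVec _ = _
    rw [Matrix.mulVec_add, ha, hb]
  zero_mem' := by
    show (ρ Tmat).mulVec _ = _
    simp [Matrix.mulVec_zero]
  smul_mem' := by
    intro c a ha
    show (ρ Tmat).mulVec _ = _
    rw [Matrix.mulVec_smul, ha]

/-! ### The hyperbolic measure and Petersson scalar products -/

instance : MeasurableSpace ℍ := borel ℍ

/-- The measure `dx dy` on `ℍ` (hyperbolic weights are carried by the integrands). -/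
def μH : Measure ℍ := (MeasureTheory.volume : Measure ℂ).comap (fun τ : ℍ => (τ : ℂ))

/-- The standard (closed) fundamental domain of `SL(2,ℤ)\ℍ`. -/
def fdSL : Set ℍ := ModularGroup.fd

/-- The Petersson scalar product `⟨f, g⟩_ι` of vector-valued forms `f` of type `ρ` and
`g` of type `σ`, with respect to the embedding `ι : 𝟙 ↪ ρ ⊗ σ̄` with `ι(1) = u`:
`∫_{SL(2,ℤ)\ℍ} ⟨(f ⊗ ḡ)(τ), ι(1)⟩ y^{k-2} dx dy`. -/
def petersson {α β : Type*} [Fintype α] [Fintype β] (k : ℤ) (u : α × β → ℂ)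
    (f : ℍ → α → ℂ) (g : ℍ → β → ℂ) : ℂ :=
  ∫ τ in fdSL, (∑ a, ∑ b, f τ a * conj (g τ b) * conj (u (a, b))) *
    ((τ.im : ℂ)) ^ (k - 2) ∂μH

/-- The regularized Petersson scalar product (regularized as the limit of integrals
over truncations of the fundamental domain). -/
def peterssonReg {α β : Type*} [Fintype α] [Fintype β] (k : ℤ) (u : α × β → ℂ)
    (f : ℍ → α → ℂ) (g : ℍ → β → ℂ) : ℂ :=
  limUnder Filter.atTop (fun t : ℝ =>
    ∫ τ in {τ ∈ fdSL | τ.im ≤ t}, (∑ a, ∑ b, f τ a * conj (g τ b) * conj (u (a, b))) *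
      ((τ.im : ℂ)) ^ (k - 2) ∂μH)

/-- The canonical `ι(1) = ∑_w w ⊗ w̄` for forms of the same type. -/
def diagPair (α : Type*) : α × α → ℂ := fun p => if p.1 = p.2 then 1 else 0

/-- A fundamental domain for `Γ\ℍ` obtained from coset representatives. -/
def fdGamma (Γ : Subgroup SL(2, ℤ)) (sec : Cos Γ → SL(2, ℤ)) : Set ℍ :=
  ⋃ c : Cos Γ, (fun τ => sec c • τ) '' fdSL

/-- The normalized Petersson scalar product of two classical modular forms for `Γ`:
`[SL(2,ℤ):Γ]⁻¹ ∫_{Γ\ℍ} f(τ) conj(g(τ)) y^{k-2} dx dy`. -/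
def peterssonGamma (k : ℤ) (Γ : Subgroup SL(2, ℤ)) (sec : Cos Γ → SL(2, ℤ))
    (f g : ℍ → ℂ) : ℂ :=
  ((Γ.index : ℂ))⁻¹ *
    ∫ τ in fdGamma Γ sec, f τ * conj (g τ) * ((τ.im : ℂ)) ^ (k - 2) ∂μH

/-! ### Kernels, finite index, instances -/

/-- The kernel of a representation. -/
def repKer {ι : Type*} [Fintype ι] (ρ : SL(2, ℤ) → Matrix ι ι ℂ) (hρ : IsRep ρ) :
    Subgroup SL(2, ℤ) where
  carrier := {γ | ρ γ = 1}
  one_mem' := hρ.1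
  mul_mem' := by
    intro a b ha hb
    show ρ (_ * _) = 1
    rw [hρ.2, ha, hb, one_mul]
  inv_mem' := by
    intro a ha
    show ρ _⁻¹ = 1
    have h2 := hρ.2 a⁻¹ a
    rw [inv_mul_cancel, hρ.1, ha, mul_one] at h2
    exact h2.symm

instance (Γ : Subgroup SL(2, ℤ)) [Γ.FiniteIndex] : Finite (Cos Γ) :=
  Finite.of_equiv _ (QuotientGroup.quotientRightRelEquivQuotientLeftRel Γ).symm

instance (Γ : Subgroup SL(2, ℤ)) [Γ.FiniteIndex] : Fintype (Cos Γ) := Fintype.ofFinite _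

instance (N : ℕ) [NeZero N] : (CongruenceSubgroup.Gamma N).FiniteIndex := by
  haveI : Finite (Matrix.SpecialLinearGroup (Fin 2) (ZMod N)) := Subtype.finite
  have : (CongruenceSubgroup.Gamma N) = (Matrix.SpecialLinearGroup.map (Int.castRingHom (ZMod N))).ker := rfl
  rw [this]
  infer_instance

instance (N : ℕ) [NeZero N] : (Gamma0 N).FiniteIndex := by
  refine Subgroup.finiteIndex_of_le (H := CongruenceSubgroup.Gamma N) ?_
  intro γ hγ
  rw [Gamma_mem] at hγ
  rw [Gamma0_mem]
  exact hγ.2.2.1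

instance (N : ℕ) [NeZero N] : (Gamma1 N).FiniteIndex := by
  refine Subgroup.finiteIndex_of_le (H := CongruenceSubgroup.Gamma N) ?_
  intro γ hγ
  rw [Gamma_mem] at hγ
  rw [Gamma1_mem]
  exact ⟨hγ.1, hγ.2.2.2, hγ.2.2.1⟩

/-- A sesquilinear scalar product on `ι → ℂ` with Gram matrix `B`:
`⟨v, w⟩_B = ∑_{i,j} conj(w i) B i j v j`. -/
def sesq {ι : Type*} [Fintype ι] (B : Matrix ι ι ℂ) (v w : ι → ℂ) : ℂ :=
  ∑ i, ∑ j, conj (w i) * B i j * v j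

/-- The scalar product `⟨v ⊗ 𝔢_m, w ⊗ 𝔢_{m'}⟩ = δ_{m,m'} ⟨v,w⟩_B` on `V(ρ) ⊗ ℂ[Δ_M]`. -/
def blockDiagGram {ι : Type*} (M : ℕ) (B : Matrix ι ι ℂ) :
    Matrix (ι × Delta M) (ι × Delta M) ℂ :=
  Matrix.of fun p q => if p.2 = q.2 then B p.1 q.1 else 0

/-- The inclusion `𝟙 → T_M 𝟙`, `c ↦ c ∑_{m ∈ Δ_M} 𝔢_m`. -/
def oneIncl (M : ℕ) : Matrix (Unit × Delta M) Unit ℂ :=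
  Matrix.of fun _ _ => 1

/-- `T_M φ` for a homomorphism (intertwining matrix) `φ : ρ → σ`:
`v ⊗ 𝔢_m ↦ φ(v) ⊗ 𝔢_m`. -/
def heckeHom {ι κ : Type*} (M : ℕ) (φ : Matrix κ ι ℂ) :
    Matrix (κ × Delta M) (ι × Delta M) ℂ :=
  fun p q => if p.2 = q.2 then φ p.1 q.1 else 0

/-- The surjection `(T_M ρ) ⊗ (T_M σ) → T_M (ρ ⊗ σ)`:
`(v ⊗ 𝔢_m) ⊗ (w ⊗ 𝔢_{m'}) ↦ δ_{m,m'} (v ⊗ w) ⊗ 𝔢_m`. -/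
def heckeTenProj (ι κ : Type*) (M : ℕ) :
    Matrix ((ι × κ) × Delta M) ((ι × Delta M) × (κ × Delta M)) ℂ :=
  fun p q => if p.1.1 = q.1.1 ∧ p.1.2 = q.2.1 ∧ p.2 = q.1.2 ∧ q.1.2 = q.2.2 then 1 else 0

/-! ### Classical operators, special matrices, and intertwining inclusions -/

set_option linter.unnecessarySeqFocus false

/-- The scalar slash `(f ∣_k m)(τ) = (a/d)^{k/2} f((aτ+b)/d)` for `m = (a b; 0 d)`. -/
def cmslash (k : ℤ) (m : GL2ℤ) (f : ℍ → ℂ) : ℍ → ℂ :=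
  fun τ => (((((m 0 0 : ℤ) : ℝ) / ((m 1 1 : ℤ) : ℝ)) ^ ((k : ℝ) / 2) : ℝ) : ℂ) *
    f (utAct m τ)

/-- `𝔢_γ`, the standard basis vector of `ℂ[Γ\SL(2,ℤ)]` at the coset `Γγ`. -/
def eCos (Γ : Subgroup SL(2, ℤ)) (γ : SL(2, ℤ)) : Cos Γ → ℂ :=
  fun c => if c = mkCos Γ γ then 1 else 0

/-- The matrix `m_M = diag(M, 1) ∈ Δ_M`. -/
def mMat (M : ℕ) (hM : 0 < M) : Delta M :=
  ⟨!![(M : ℤ), 0; 0, 1], by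
    refine ⟨?_, ?_, ?_, ?_, ?_⟩ <;> simp <;> omega⟩

/-- The matrix `m'_M = diag(1, M) ∈ Δ_M`. -/
def mMat' (M : ℕ) (hM : 0 < M) : Delta M :=
  ⟨!![1, 0; 0, (M : ℤ)], by
    refine ⟨?_, ?_, ?_, ?_, ?_⟩ <;> simp <;> omega⟩

/-- The matrix `m_{M,b} = (M b; 0 M) ∈ Δ_{M²}` for `0 ≤ b < M`. -/
def mMatB (M : ℕ) (b : Fin M) : Delta (M * M) :=
  ⟨!![(M : ℤ), (b : ℤ); 0, (M : ℤ)], by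
    have hb := b.2
    refine ⟨?_, ?_, ?_, ?_, ?_⟩ <;> simp <;> omega⟩

/-- The matrix `diag(M, M) ∈ Δ_{M²}`. -/
def mMatMM (M : ℕ) (hM : 0 < M) : Delta (M * M) :=
  ⟨!![(M : ℤ), 0; 0, (M : ℤ)], by
    refine ⟨?_, ?_, ?_, ?_, ?_⟩ <;> simp <;> omega⟩

/-- Rescaling `({\rm sc}_M f)(τ) = f(M τ)`. -/
def scMul (M : ℕ) (f : ℍ → ℂ) : ℍ → ℂ := fun τ => f (utAct !![(M : ℤ), 0; 0, 1] τ)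

/-- Rescaling `({\rm sc}_{1/M} f)(τ) = f(τ / M)`. -/
def scDiv (M : ℕ) (f : ℍ → ℂ) : ℍ → ℂ := fun τ => f (utAct !![1, 0; 0, (M : ℤ)] τ)

/-- The classical Hecke operator
`(f ∣_{k,χ} T_M)(τ) = M^{k-1} ∑_{d ∣ M, 0 ≤ b < d} d^{-k} conj(χ(d)) f((M d⁻¹ τ + b)/d)`. -/
def classicalHecke {N : ℕ} (M : ℕ) (k : ℤ) (χ : DirichletCharacter ℂ N)
    (f : ℍ → ℂ) : ℍ → ℂ :=
  fun τ => (M : ℂ) ^ (k - 1) *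
    ∑ d ∈ M.divisors, ∑ b ∈ Finset.range d,
      ((d : ℂ)) ^ (-k) * conj (χ ((d : ℕ) : ZMod N)) *
        f (utAct !![((M / d : ℕ) : ℤ), (b : ℤ); 0, ((d : ℕ) : ℤ)] τ)

/-- `e_M(x) = exp(2πi x/M)`. -/
def eM (M : ℕ) (x : ℤ) : ℂ := Complex.exp (2 * Real.pi * Complex.I * x / M)

/-- The Gauss sum `G(ε, e_M(b)) = ∑_{a mod M} ε(a) e_M(a b)`. -/
def gaussSumE {M : ℕ} (ε : DirichletCharacter ℂ M) (b : ℤ) : ℂ :=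
  ∑ a ∈ Finset.range M, ε ((a : ℕ) : ZMod M) * eM M ((a : ℤ) * b)

/-- The value `χ(I_{I₂}(δ))` of a Dirichlet character mod `N` on the cocycle
`I_{I₂}(δ) ∈ Γ₀(N)`. -/
def cocVal {N : ℕ} (χ : DirichletCharacter ℂ N) (sec : Cos (Gamma0 N) → SL(2, ℤ))
    (δ : SL(2, ℤ)) : ℂ :=
  dirSL χ (indCoc (Gamma0 N) sec (mkCos (Gamma0 N) 1) δ)

/-- The inclusion `ι_Hecke : ρ_χ → T_M ρ_χ`,
`𝔢_γ ↦ M^{k/2-1} ∑_{m ∈ Δ_M} χ(m) conj(χ(I_{I₂}(I_m(γ)))) 𝔢_{I_m(γ)} ⊗ 𝔢_{m·γ}`. -/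
def iotaHecke {N : ℕ} (M : ℕ) (k : ℤ) (χ : DirichletCharacter ℂ N)
    (sec : Cos (Gamma0 N) → SL(2, ℤ))
    (bar : Delta M → SL(2, ℤ) → Delta M) (coc : Delta M → SL(2, ℤ) → SL(2, ℤ)) :
    Matrix (Cos (Gamma0 N) × Delta M) (Cos (Gamma0 N)) ℂ :=
  Matrix.of fun p c =>
    ((((M : ℝ) ^ ((k : ℝ) / 2 - 1) : ℝ)) : ℂ) *
      ∑ m : Delta M,
        if p.2 = bar m (sec c) ∧ p.1 = mkCos (Gamma0 N) (coc m (sec c)) then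
          χ ((m.1 1 1 : ℤ) : ZMod N) * conj (cocVal χ sec (coc m (sec c)))
        else 0

/-- The inclusion `ι_AL : ρ_{χ'} → T_M ρ_χ`,
`𝔢_γ ↦ conj(χ(I_{I₂}(γ_{M,N} I_{m_M}(γ)))) 𝔢_{γ_{M,N} I_{m_M}(γ)} ⊗ 𝔢_{m_M·γ}`. -/
def iotaAL {N : ℕ} (M : ℕ) (hM : 0 < M) (χ : DirichletCharacter ℂ N)
    (sec : Cos (Gamma0 N) → SL(2, ℤ)) (γMN : SL(2, ℤ))
    (bar : Delta M → SL(2, ℤ) → Delta M) (coc : Delta M → SL(2, ℤ) → SL(2, ℤ)) :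
    Matrix (Cos (Gamma0 N) × Delta M) (Cos (Gamma0 N)) ℂ :=
  Matrix.of fun p c =>
    if p.2 = bar (mMat M hM) (sec c) ∧
        p.1 = mkCos (Gamma0 N) (γMN * coc (mMat M hM) (sec c)) then
      conj (cocVal χ sec (γMN * coc (mMat M hM) (sec c)))
    else 0

/-- The inclusion `ι_old : ρ_{χ_M} → T_M ρ_χ`,
`𝔢_γ ↦ M^{-k/2} conj(χ(I_{I₂}(I_{m_M}(γ)))) 𝔢_{I_{m_M}(γ)} ⊗ 𝔢_{m_M·γ}`. -/
def iotaOld {N : ℕ} (M : ℕ) (hM : 0 < M) (k : ℤ) (χ : DirichletCharacter ℂ N)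
    (sec : Cos (Gamma0 N) → SL(2, ℤ)) (secMN : Cos (Gamma0 (M * N)) → SL(2, ℤ))
    (bar : Delta M → SL(2, ℤ) → Delta M) (coc : Delta M → SL(2, ℤ) → SL(2, ℤ)) :
    Matrix (Cos (Gamma0 N) × Delta M) (Cos (Gamma0 (M * N))) ℂ :=
  Matrix.of fun p c =>
    if p.2 = bar (mMat M hM) (secMN c) ∧
        p.1 = mkCos (Gamma0 N) (coc (mMat M hM) (secMN c)) then
      ((((M : ℝ) ^ (-((k : ℝ) / 2)) : ℝ)) : ℂ) *
        conj (cocVal χ sec (coc (mMat M hM) (secMN c)))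
    else 0

/-- The subgroup `Γ₁(N², N) = {γ : c(γ) ≡ 0 mod N², a(γ) ≡ d(γ) ≡ 1 mod N}`. -/
def Gamma1Sq (N : ℕ) : Subgroup SL(2, ℤ) := Gamma0 (N * N) ⊓ Gamma1 N

instance (N : ℕ) [NeZero N] : (Gamma1Sq N).FiniteIndex := by
  unfold Gamma1Sq
  infer_instance

/-- The inclusion `ι_{Γ(N)} : ρ_{Γ(N)} → T_N ρ_{Γ₁(N²,N)}`,
`𝔢_γ ↦ N^{k/2} 𝔢_{I_{m'_N}(γ)} ⊗ 𝔢_{m'_N·γ}`. -/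
def iotaGammaN (N : ℕ) (hN : 0 < N) (k : ℤ)
    (secG : Cos (CongruenceSubgroup.Gamma N) → SL(2, ℤ))
    (bar : Delta N → SL(2, ℤ) → Delta N) (coc : Delta N → SL(2, ℤ) → SL(2, ℤ)) :
    Matrix (Cos (Gamma1Sq N) × Delta N) (Cos (CongruenceSubgroup.Gamma N)) ℂ :=
  Matrix.of fun p c =>
    if p.2 = bar (mMat' N hN) (secG c) ∧
        p.1 = mkCos (Gamma1Sq N) (coc (mMat' N hN) (secG c)) then
      ((((N : ℝ) ^ ((k : ℝ) / 2) : ℝ)) : ℂ)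
    else 0

/-- The inclusion `ι_twist : ρ_{χ'} → T_{M²} ρ_χ`,
`𝔢_γ ↦ M⁻¹ ∑_{b mod M} G(ε, e_M(-b)) conj(χ(I_{I₂}(I_{m_{M,b}}(γ))))
𝔢_{I_{m_{M,b}}(γ)} ⊗ 𝔢_{m_{M,b}·γ}`. -/
def iotaTwist {N : ℕ} (M : ℕ) (χ : DirichletCharacter ℂ N)
    (ε : DirichletCharacter ℂ M)
    (sec : Cos (Gamma0 N) → SL(2, ℤ)) (sec' : Cos (Gamma0 (N * (M * M))) → SL(2, ℤ))
    (bar : Delta (M * M) → SL(2, ℤ) → Delta (M * M))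
    (coc : Delta (M * M) → SL(2, ℤ) → SL(2, ℤ)) :
    Matrix (Cos (Gamma0 N) × Delta (M * M)) (Cos (Gamma0 (N * (M * M)))) ℂ :=
  Matrix.of fun p c =>
    ((M : ℂ))⁻¹ *
      ∑ b : Fin M,
        if p.2 = bar (mMatB M b) (sec' c) ∧
            p.1 = mkCos (Gamma0 N) (coc (mMatB M b) (sec' c)) then
          gaussSumE ε (-(b : ℤ)) * conj (cocVal χ sec (coc (mMatB M b) (sec' c)))
        else 0

/-- The inclusion `ι_id : ρ_χ → T_{M²} ρ_χ`, `𝔢_γ ↦ 𝔢_γ ⊗ 𝔢_{diag(M,M)}`. -/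
def iotaId {N : ℕ} (M : ℕ) (hM : 0 < M) :
    Matrix (Cos (Gamma0 N) × Delta (M * M)) (Cos (Gamma0 N)) ℂ :=
  Matrix.of fun p c => if p.1 = c ∧ p.2 = mMatMM M hM then 1 else 0

end VVMF

open VVMF

section Aux

open VVMF UpperHalfPlane

namespace VVMF

variable {M : ℕ}

lemma d_pos (hM : 0 < M) (m : Delta M) : 0 < m.1 1 1 := by
  obtain ⟨hc, ha, hdet, hb0, hbd⟩ := m.2
  have : (0:ℤ) < (M:ℤ) := by exact_mod_cast hM
  nlinarith

lemma denomZ_eq (γ : SL(2, ℤ)) (τ : ℍ) : denomZ γ τ = UpperHalfPlane.denom γ τ := by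
  rw [ModularGroup.denom_apply]; rfl

lemma denomZ_ne_zero (γ : SL(2, ℤ)) (τ : ℍ) : denomZ γ τ ≠ 0 := by
  rw [denomZ_eq]; exact UpperHalfPlane.denom_ne_zero _ _

lemma coe_SL_smul (g : SL(2, ℤ)) (z : ℍ) :
    ((g • z : ℍ) : ℂ) = (((g 0 0 : ℤ) : ℂ) * z + ((g 0 1 : ℤ) : ℂ)) / denomZ g z := by
  rw [UpperHalfPlane.specialLinearGroup_apply, UpperHalfPlane.coe_mk, denomZ]
  push_cast
  rfl

lemma frac_im (m : GL2ℤ) (τ : ℍ) :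
    (((((m 0 0 : ℤ) : ℂ)) * (τ : ℂ) + ((m 0 1 : ℤ) : ℂ)) / ((m 1 1 : ℤ) : ℂ)).im
      = (m 0 0 : ℝ) * τ.im / (m 1 1 : ℝ) := by
  have : ((m 1 1 : ℤ) : ℂ) = (((m 1 1 : ℤ) : ℝ) : ℂ) := by push_cast; rfl
  rw [this, Complex.div_ofReal_im]
  congr 1
  simp [Complex.add_im, Complex.mul_im, UpperHalfPlane.coe_im]

lemma frac_im_pos {m : GL2ℤ} (ha : 0 < m 0 0) (hd : 0 < m 1 1) (τ : ℍ) :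
    0 < (((((m 0 0 : ℤ) : ℂ)) * (τ : ℂ) + ((m 0 1 : ℤ) : ℂ)) / ((m 1 1 : ℤ) : ℂ)).im := by
  rw [frac_im]
  have ha' : (0:ℝ) < (m 0 0 : ℤ) := by exact_mod_cast ha
  have hd' : (0:ℝ) < (m 1 1 : ℤ) := by exact_mod_cast hd
  positivity

lemma utAct_coe {m : GL2ℤ} (ha : 0 < m 0 0) (hd : 0 < m 1 1) (τ : ℍ) :
    ((utAct m τ : ℍ) : ℂ)
      = ((((m 0 0 : ℤ) : ℂ)) * (τ : ℂ) + ((m 0 1 : ℤ) : ℂ)) / ((m 1 1 : ℤ) : ℂ) := by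
  rw [utAct, dif_pos (frac_im_pos ha hd τ)]

lemma utAct_im {m : GL2ℤ} (ha : 0 < m 0 0) (hd : 0 < m 1 1) (τ : ℍ) :
    (utAct m τ).im = (m 0 0 : ℝ) * τ.im / (m 1 1 : ℝ) := by
  rw [UpperHalfPlane.im, utAct_coe ha hd, frac_im]

end VVMF

end Aux

section Aux2

open VVMF UpperHalfPlane

namespace VVMF

variable {M : ℕ}

lemma sl_entry_eq {bar : Delta M → SL(2, ℤ) → Delta M}
    {coc : Delta M → SL(2, ℤ) → SL(2, ℤ)} (hd : HeckeData M bar coc)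
    (m : Delta M) (γ : SL(2, ℤ)) (i j : Fin 2) :
    (coc m γ) i 0 * (bar m γ).1 0 j + (coc m γ) i 1 * (bar m γ).1 1 j
      = m.1 i 0 * γ 0 j + m.1 i 1 * γ 1 j := by
  have h : ∀ i j, (((coc m γ : SL(2, ℤ)) : GL2ℤ) * (bar m γ).1) i j
      = (m.1 * (γ : GL2ℤ)) i j := fun i j => by rw [hd m γ]
  have := h i j
  simpa [Matrix.mul_apply, Fin.sum_univ_two] using this

lemma delta_eq_of_SL_mul (hM : 0 < M) (u : SL(2, ℤ)) (m m' : Delta M)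
    (h : (u : GL2ℤ) * m.1 = m'.1) : m' = m := by
  obtain ⟨hc, ha, hdet, hb0, hbd⟩ := m.2
  obtain ⟨hc', ha', hdet', hb0', hbd'⟩ := m'.2
  have he : ∀ i j, u i 0 * m.1 0 j + u i 1 * m.1 1 j = m'.1 i j := by
    intro i j
    have : ((u : GL2ℤ) * m.1) i j = m'.1 i j := by rw [h]
    simpa [Matrix.mul_apply, Fin.sum_univ_two] using this
  have hu : u 0 0 * u 1 1 - u 0 1 * u 1 0 = 1 := by
    have := u.2
    rw [Matrix.det_fin_two] at this
    exact this
  have h10 := he 1 0; have h00 := he 0 0; have h01 := he 0 1; have h11 := he 1 1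
  rw [hc] at h10 h00
  rw [hc'] at h10
  simp only [mul_zero, add_zero, zero_add] at h10 h00 h01 h11
  have hd_pos : 0 < m.1 1 1 := by omega
  have hu10 : u 1 0 = 0 := by
    rcases mul_eq_zero.mp h10 with h | h
    · exact h
    · omega
  rw [hu10] at hu
  simp only [mul_zero, sub_zero] at hu
  have hu00pos : 0 < u 0 0 := by
    have h2 : 0 < u 0 0 * m.1 0 0 := h00 ▸ ha'
    rcases mul_pos_iff.mp h2 with ⟨h3, _⟩ | ⟨_, h4⟩
    · exact h3
    · omega
  have hu0011 : u 0 0 = 1 ∧ u 1 1 = 1 := by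
    rcases Int.mul_eq_one_iff_eq_one_or_neg_one.mp hu with ⟨p, q⟩ | ⟨p, q⟩
    · exact ⟨p, q⟩
    · omega
  obtain ⟨hu00, hu11⟩ := hu0011
  rw [hu00, one_mul] at h00 h01
  rw [hu10, zero_mul, zero_add, hu11, one_mul] at h11
  have hu01 : u 0 1 = 0 := by
    have h5 : u 0 1 * m.1 1 1 = m'.1 0 1 - m.1 0 1 := by omega
    rcases lt_trichotomy (u 0 1) 0 with hlt | he0 | hgt
    · exfalso
      nlinarith [mul_le_mul_of_nonneg_right (show u 0 1 ≤ -1 by omega) hd_pos.le]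
    · exact he0
    · exfalso
      nlinarith [mul_le_mul_of_nonneg_right (show 1 ≤ u 0 1 by omega) hd_pos.le]
  rw [hu01, zero_mul, add_zero] at h01
  apply Subtype.ext
  ext i j
  fin_cases i <;> fin_cases j
  · exact h00.symm
  · exact h01.symm
  · show m'.1 1 0 = m.1 1 0
    rw [hc, hc']
  · exact h11.symm

lemma bar_bijective (hM : 0 < M) {bar : Delta M → SL(2, ℤ) → Delta M}
    {coc : Delta M → SL(2, ℤ) → SL(2, ℤ)} (hd : HeckeData M bar coc) (γ : SL(2, ℤ)) :
    Function.Bijective (fun m : Delta M => bar m γ) := by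
  rw [← Finite.injective_iff_bijective]
  intro m m' h
  simp only at h
  have h1 := hd m γ
  have h2 := hd m' γ
  rw [h] at h1
  have hγ : (γ : GL2ℤ) * ((γ⁻¹ : SL(2, ℤ)) : GL2ℤ) = 1 := by
    rw [← Matrix.SpecialLinearGroup.coe_mul, mul_inv_cancel,
      Matrix.SpecialLinearGroup.coe_one]
  have hC : (((coc m γ)⁻¹ : SL(2, ℤ)) : GL2ℤ) * ((coc m γ : SL(2, ℤ)) : GL2ℤ) = 1 := by
    rw [← Matrix.SpecialLinearGroup.coe_mul, inv_mul_cancel,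
      Matrix.SpecialLinearGroup.coe_one]
  have key : ((coc m' γ * (coc m γ)⁻¹ : SL(2, ℤ)) : GL2ℤ) * m.1 = m'.1 := by
    have cancel : ∀ A B : GL2ℤ, A * (γ : GL2ℤ) = B * (γ : GL2ℤ) → A = B := by
      intro A B hAB
      have h3 := congrArg (fun X => X * ((γ⁻¹ : SL(2, ℤ)) : GL2ℤ)) hAB
      simpa only [mul_assoc, hγ, mul_one] using h3
    apply cancel
    calc ((coc m' γ * (coc m γ)⁻¹ : SL(2, ℤ)) : GL2ℤ) * m.1 * (γ : GL2ℤ)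
        = ((coc m' γ : SL(2, ℤ)) : GL2ℤ) * ((((coc m γ)⁻¹ : SL(2, ℤ)) : GL2ℤ) *
            (m.1 * (γ : GL2ℤ))) := by
          rw [Matrix.SpecialLinearGroup.coe_mul]; noncomm_ring
      _ = ((coc m' γ : SL(2, ℤ)) : GL2ℤ) * ((((coc m γ)⁻¹ : SL(2, ℤ)) : GL2ℤ) *
            (((coc m γ : SL(2, ℤ)) : GL2ℤ) * (bar m' γ).1)) := by rw [h1]
      _ = ((coc m' γ : SL(2, ℤ)) : GL2ℤ) * (bar m' γ).1 := by
          rw [← mul_assoc (((coc m γ)⁻¹ : SL(2, ℤ)) : GL2ℤ), hC, one_mul]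
      _ = m'.1 * (γ : GL2ℤ) := h2
  exact (delta_eq_of_SL_mul hM _ m m' key).symm

end VVMF

end Aux2

section Aux3

open VVMF UpperHalfPlane

namespace VVMF

variable {M : ℕ}

lemma rpow_scalar (k : ℤ) {a d aa dd : ℝ} (ha : 0 < a) (hd : 0 < d) (haa : 0 < aa)
    (hdd : 0 < dd) (h1 : a * d = aa * dd) :
    (a / d) ^ ((k : ℝ) / 2) = (aa / dd) ^ ((k : ℝ) / 2) * (d / dd) ^ (-k : ℤ) := by
  rw [← Real.rpow_intCast (d / dd) (-k), Real.rpow_def_of_pos (by positivity),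
    Real.rpow_def_of_pos (by positivity), Real.rpow_def_of_pos (by positivity),
    ← Real.exp_add]
  congr 1
  rw [Real.log_div ha.ne' hd.ne', Real.log_div haa.ne' hdd.ne', Real.log_div hd.ne' hdd.ne']
  have h2 : Real.log a + Real.log d = Real.log aa + Real.log dd := by
    rw [← Real.log_mul ha.ne' hd.ne', ← Real.log_mul haa.ne' hdd.ne', h1]
  push_cast
  linear_combination ((k : ℝ) / 2) * h2

lemma scalar_c (k : ℤ) {a d aa dd : ℝ} (ha : 0 < a) (hd : 0 < d) (haa : 0 < aa)
    (hdd : 0 < dd) (h1 : a * d = aa * dd) {X Y : ℂ} (hX : X ≠ 0)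
    (hY : (dd : ℂ) * Y = (d : ℂ) * X) :
    (((a / d) ^ ((k : ℝ) / 2) : ℝ) : ℂ) * X ^ (-k) =
      (((aa / dd) ^ ((k : ℝ) / 2) : ℝ) : ℂ) * Y ^ (-k) := by
  have hdd0 : (dd : ℂ) ≠ 0 := by exact_mod_cast hdd.ne'
  have hY' : Y = (((d / dd : ℝ)) : ℂ) * X := by
    push_cast
    rw [div_mul_eq_mul_div, eq_div_iff hdd0]
    linear_combination hY
  rw [hY', mul_zpow, rpow_scalar k ha hd haa hdd h1, Complex.ofReal_mul,
    Complex.ofReal_zpow]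
  ring

lemma key_step {ι : Type*} [Fintype ι] (hM : 0 < M) (k : ℤ)
    (ρ : SL(2, ℤ) → Matrix ι ι ℂ)
    {bar : Delta M → SL(2, ℤ) → Delta M} {coc : Delta M → SL(2, ℤ) → SL(2, ℤ)}
    (hd : HeckeData M bar coc) {f : ℍ → ι → ℂ}
    (hf : ∀ γ : SL(2, ℤ), vslash k ρ γ f = f)
    (m : Delta M) (γ : SL(2, ℤ)) (τ : ℍ) (i : ι) :
    denomZ γ τ ^ (-k) * ∑ j, ρ ((coc m γ)⁻¹) i j * mslash k m.1 f (γ • τ) j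
      = mslash k (bar m γ).1 f τ i := by
  obtain ⟨hc, haz, hdet, hb0, hbd⟩ := m.2
  obtain ⟨hc', haz', hdet', hb0', hbd'⟩ := (bar m γ).2
  have hdm : 0 < m.1 1 1 := by omega
  have hdm' : 0 < (bar m γ).1 1 1 := by omega
  set δ := coc m γ with hδdef
  set z := utAct (bar m γ).1 τ with hzdef
  have hzc : (z : ℂ) = (((bar m γ).1 0 0 : ℤ) * (τ : ℂ) + ((bar m γ).1 0 1 : ℤ)) /
      ((bar m γ).1 1 1 : ℤ) := utAct_coe haz' hdm' τ
  have E : ∀ i j : Fin 2,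
      ((δ i 0 : ℤ) : ℂ) * ((bar m γ).1 0 j : ℤ) + ((δ i 1 : ℤ) : ℂ) * ((bar m γ).1 1 j : ℤ)
        = ((m.1 i 0 : ℤ) : ℂ) * ((γ 0 j : ℤ) : ℂ) + ((m.1 i 1 : ℤ) : ℂ) * ((γ 1 j : ℤ) : ℂ) := by
    intro i j
    exact_mod_cast congrArg (Int.cast : ℤ → ℂ) (sl_entry_eq hd m γ i j)
  have e00 := E 0 0; have e01 := E 0 1; have e10 := E 1 0; have e11 := E 1 1
  simp only [hc, hc', Int.cast_zero, zero_mul, mul_zero, add_zero, zero_add] at e00 e01 e10 e11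
  have hDγ : denomZ γ τ ≠ 0 := denomZ_ne_zero γ τ
  have hDδ : denomZ δ z ≠ 0 := denomZ_ne_zero δ z
  have hdC : ((m.1 1 1 : ℤ) : ℂ) ≠ 0 := by exact_mod_cast hdm.ne'
  have hd'C : (((bar m γ).1 1 1 : ℤ) : ℂ) ≠ 0 := by exact_mod_cast hdm'.ne'
  have Hnum : ((δ 0 0 : ℤ) : ℂ) * (((bar m γ).1 0 0 : ℤ) * (τ : ℂ) + ((bar m γ).1 0 1 : ℤ))
        + ((δ 0 1 : ℤ) : ℂ) * ((bar m γ).1 1 1 : ℤ)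
      = ((m.1 0 0 : ℤ) : ℂ) * (((γ 0 0 : ℤ) : ℂ) * (τ : ℂ) + ((γ 0 1 : ℤ) : ℂ))
        + ((m.1 0 1 : ℤ) : ℂ) * (((γ 1 0 : ℤ) : ℂ) * (τ : ℂ) + ((γ 1 1 : ℤ) : ℂ)) := by
    linear_combination (τ : ℂ) * e00 + e01
  have Hden : ((δ 1 0 : ℤ) : ℂ) * (((bar m γ).1 0 0 : ℤ) * (τ : ℂ) + ((bar m γ).1 0 1 : ℤ))
        + ((δ 1 1 : ℤ) : ℂ) * ((bar m γ).1 1 1 : ℤ)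
      = ((m.1 1 1 : ℤ) : ℂ) * (((γ 1 0 : ℤ) : ℂ) * (τ : ℂ) + ((γ 1 1 : ℤ) : ℂ)) := by
    linear_combination (τ : ℂ) * e10 + e11
  have h2 : (((bar m γ).1 1 1 : ℤ) : ℂ) * denomZ δ z = ((m.1 1 1 : ℤ) : ℂ) * denomZ γ τ := by
    rw [denomZ, denomZ, hzc]
    field_simp
    linear_combination Hden
  have h1 : utAct m.1 (γ • τ) = δ • z := by
    have key : ((utAct m.1 (γ • τ) : ℍ) : ℂ) = ((δ • z : ℍ) : ℂ) := by
      rw [utAct_coe haz hdm, coe_SL_smul δ z, coe_SL_smul γ τ, hzc]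
      have hgoal2 : ((δ 0 0 : ℤ) : ℂ) * ((((bar m γ).1 0 0 : ℤ) * (τ : ℂ)
            + ((bar m γ).1 0 1 : ℤ)) / ((bar m γ).1 1 1 : ℤ)) + ((δ 0 1 : ℤ) : ℂ)
          = (((m.1 0 0 : ℤ) : ℂ) * (((γ 0 0 : ℤ) : ℂ) * (τ : ℂ) + ((γ 0 1 : ℤ) : ℂ))
            + ((m.1 0 1 : ℤ) : ℂ) * denomZ γ τ) / ((bar m γ).1 1 1 : ℤ) := by
        rw [denomZ, eq_div_iff hd'C]
        field_simp
        linear_combination Hnum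
      have hden2 : denomZ δ z = ((m.1 1 1 : ℤ) : ℂ) * denomZ γ τ / ((bar m γ).1 1 1 : ℤ) := by
        rw [eq_div_iff hd'C]
        linear_combination h2
      rw [hgoal2, hden2]
      rw [denomZ] at hDγ ⊢
      field_simp
      rw [div_add' _ _ _ (by rw [mul_comm]; exact hDγ)]; ring
    exact UpperHalfPlane.ext key
  have hinv := congrFun (congrFun (hf δ) z) i
  simp only [vslash, Pi.smul_apply, smul_eq_mul, Matrix.mulVec, dotProduct] at hinv
  simp only [mslash, Pi.smul_apply, smul_eq_mul, h1]
  rw [← hinv]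
  have haR : (0:ℝ) < ((m.1 0 0 : ℤ) : ℝ) := by exact_mod_cast haz
  have hdR : (0:ℝ) < ((m.1 1 1 : ℤ) : ℝ) := by exact_mod_cast hdm
  have haR' : (0:ℝ) < (((bar m γ).1 0 0 : ℤ) : ℝ) := by exact_mod_cast haz'
  have hdR' : (0:ℝ) < (((bar m γ).1 1 1 : ℤ) : ℝ) := by exact_mod_cast hdm'
  have hprod : ((m.1 0 0 : ℤ) : ℝ) * ((m.1 1 1 : ℤ) : ℝ)
      = (((bar m γ).1 0 0 : ℤ) : ℝ) * (((bar m γ).1 1 1 : ℤ) : ℝ) := by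
    have h3 : m.1 0 0 * m.1 1 1 = (bar m γ).1 0 0 * (bar m γ).1 1 1 := by omega
    exact_mod_cast congrArg (Int.cast : ℤ → ℝ) h3
  have h2' : ((((((bar m γ).1 1 1 : ℤ) : ℝ)) : ℂ)) * denomZ δ z
      = (((((m.1 1 1 : ℤ) : ℝ)) : ℂ)) * denomZ γ τ := by
    push_cast
    push_cast at h2
    exact h2
  have hsc := scalar_c k haR hdR haR' hdR' hprod hDγ h2'
  have hsum : ∑ j, ρ δ⁻¹ i j *
        ((((((m.1 0 0 : ℤ) : ℝ) / ((m.1 1 1 : ℤ) : ℝ)) ^ ((k : ℝ) / 2) : ℝ) : ℂ)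
          * f (δ • z) j)
      = (((((m.1 0 0 : ℤ) : ℝ) / ((m.1 1 1 : ℤ) : ℝ)) ^ ((k : ℝ) / 2) : ℝ) : ℂ)
          * ∑ j, ρ δ⁻¹ i j * f (δ • z) j := by
    rw [Finset.mul_sum]
    exact Finset.sum_congr rfl (fun j _ => by ring)
  rw [hsum]
  linear_combination (∑ j, ρ δ⁻¹ i j * f (δ • z) j) * hsc

end VVMF

end Aux3

section Aux4

open VVMF UpperHalfPlane

namespace VVMF

variable {M : ℕ}

lemma utAct_eq_ofComplex {m : GL2ℤ} (ha : 0 < m 0 0) (hdm : 0 < m 1 1) (τ : ℍ) :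
    utAct m τ = ofComplex ((((m 0 0 : ℤ) : ℂ) * (τ : ℂ) + ((m 0 1 : ℤ) : ℂ)) /
      ((m 1 1 : ℤ) : ℂ)) := by
  rw [utAct, dif_pos (frac_im_pos ha hdm τ),
    ofComplex_apply_of_im_pos (frac_im_pos ha hdm τ)]

lemma mdiff_utAct_comp {m : GL2ℤ} (ha : 0 < m 0 0) (hdm : 0 < m 1 1)
    {g : ℍ → ℂ} (hg : MDifferentiable 𝓘(ℂ) 𝓘(ℂ) g) :
    MDifferentiable 𝓘(ℂ) 𝓘(ℂ) (fun τ : ℍ => g (utAct m τ)) := by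
  intro τ
  have heq : (fun τ : ℍ => g (utAct m τ))
      = ((g ∘ ofComplex) ∘ (fun w : ℂ => (((m 0 0 : ℤ) : ℂ) * w + ((m 0 1 : ℤ) : ℂ)) /
          ((m 1 1 : ℤ) : ℂ))) ∘ (fun τ : ℍ => (τ : ℂ)) := by
    funext σ
    simp only [Function.comp_apply]
    rw [utAct_eq_ofComplex ha hdm σ]
  rw [heq]
  have h1 : MDifferentiableAt 𝓘(ℂ) 𝓘(ℂ)
      (fun w : ℂ => (((m 0 0 : ℤ) : ℂ) * w + ((m 0 1 : ℤ) : ℂ)) / ((m 1 1 : ℤ) : ℂ))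
      ((τ : ℂ)) := by
    apply DifferentiableAt.mdifferentiableAt
    fun_prop
  have h2 : MDifferentiableAt 𝓘(ℂ) 𝓘(ℂ) (g ∘ ofComplex)
      ((((m 0 0 : ℤ) : ℂ) * (τ : ℂ) + ((m 0 1 : ℤ) : ℂ)) / ((m 1 1 : ℤ) : ℂ)) := by
    exact (hg _).comp _ (mdifferentiableAt_ofComplex (frac_im_pos ha hdm τ))
  exact (h2.comp (τ : ℂ) h1).comp τ (mdifferentiable_coe τ)

lemma mslash_mdifferentiable {ι : Type*} (k : ℤ) {m : GL2ℤ} (ha : 0 < m 0 0)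
    (hdm : 0 < m 1 1) {f : ℍ → ι → ℂ} (i : ι)
    (hf : MDifferentiable 𝓘(ℂ) 𝓘(ℂ) (fun τ : ℍ => f τ i)) :
    MDifferentiable 𝓘(ℂ) 𝓘(ℂ) (fun τ : ℍ => mslash k m f τ i) := by
  have h1 : MDifferentiable 𝓘(ℂ) 𝓘(ℂ) (fun τ : ℍ => f (utAct m τ) i) :=
    mdiff_utAct_comp ha hdm hf
  have heq : (fun τ : ℍ => mslash k m f τ i)
      = fun τ : ℍ => (((((m 0 0 : ℤ) : ℝ) / ((m 1 1 : ℤ) : ℝ)) ^ ((k : ℝ) / 2) : ℝ) : ℂ) *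
          f (utAct m τ) i := by
    funext σ
    simp [mslash]
  rw [heq]
  intro τ
  exact MDifferentiableAt.comp (I' := 𝓘(ℂ)) τ
    (DifferentiableAt.mdifferentiableAt (by fun_prop)) (h1 τ)

lemma mslash_bounded {ι : Type*} (k : ℤ) {m : GL2ℤ} (ha : 0 < m 0 0)
    (hdm : 0 < m 1 1) {f : ℍ → ι → ℂ} (i : ι)
    (hb : IsBoundedAtImInfty (fun τ : ℍ => f τ i)) :
    IsBoundedAtImInfty (fun τ : ℍ => mslash k m f τ i) := by
  rw [isBoundedAtImInfty_iff] at hb ⊢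
  obtain ⟨C, A, hCA⟩ := hb
  have haR : (0:ℝ) < ((m 0 0 : ℤ) : ℝ) := by exact_mod_cast ha
  have hdR : (0:ℝ) < ((m 1 1 : ℤ) : ℝ) := by exact_mod_cast hdm
  refine ⟨‖(((((m 0 0 : ℤ) : ℝ) / ((m 1 1 : ℤ) : ℝ)) ^ ((k : ℝ) / 2) : ℝ) : ℂ)‖ * C,
    A * ((m 1 1 : ℤ) : ℝ) / ((m 0 0 : ℤ) : ℝ), ?_⟩
  intro z hz
  have him : A ≤ (utAct m z).im := by
    rw [utAct_im ha hdm]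
    have h3 : ((m 0 0 : ℤ) : ℝ) * (A * ((m 1 1 : ℤ) : ℝ) / ((m 0 0 : ℤ) : ℝ))
        ≤ ((m 0 0 : ℤ) : ℝ) * z.im := mul_le_mul_of_nonneg_left hz haR.le
    have h4 : ((m 0 0 : ℤ) : ℝ) * (A * ((m 1 1 : ℤ) : ℝ) / ((m 0 0 : ℤ) : ℝ))
        = A * ((m 1 1 : ℤ) : ℝ) := by field_simp
    rw [le_div_iff₀ hdR]
    linarith
  have h5 : ‖f (utAct m z) i‖ ≤ C := hCA _ him
  have h6 : mslash k m f z i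
      = (((((m 0 0 : ℤ) : ℝ) / ((m 1 1 : ℤ) : ℝ)) ^ ((k : ℝ) / 2) : ℝ) : ℂ) *
        f (utAct m z) i := by simp [mslash]
  rw [h6, norm_mul]
  exact mul_le_mul_of_nonneg_left h5 (norm_nonneg _)

end VVMF

end Aux4





/-- If `f ∈ M_k(ρ)`, then `T_M f = ∑_{m ∈ Δ_M} (f ∣_k m) ⊗ 𝔢_m` is a
modular form of weight `k` and type `T_M ρ`. -/
theorem heckeT_is_modular_form {ι : Type*} [Fintype ι] (M : ℕ) (hM : 0 < M) (k : ℤ)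
    (ρ : SL(2, ℤ) → Matrix ι ι ℂ) (hρ : IsRep ρ)
    (hfin : (repKer ρ hρ).FiniteIndex)
    (bar : Delta M → SL(2, ℤ) → Delta M) (coc : Delta M → SL(2, ℤ) → SL(2, ℤ))
    (hd : HeckeData M bar coc)
    (f : ℍ → ι → ℂ) (hf : IsVModForm k ρ f) :
    IsVModForm k (heckeRep M ρ bar coc) (heckeT M k f) := by
  obtain ⟨hdiff, hslash, hbdd⟩ := hf
  refine ⟨?_, ?_, ?_⟩
  · intro p
    have h2 := p.2.2
    have ha : 0 < p.2.1 0 0 := h2.2.1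
    have hdm : 0 < p.2.1 1 1 := lt_of_le_of_lt h2.2.2.2.1 h2.2.2.2.2
    exact mslash_mdifferentiable k ha hdm p.1 (hdiff p.1)
  · intro γ
    funext τ p
    obtain ⟨i, mb⟩ := p
    obtain ⟨m₀, hm₀⟩ := (bar_bijective hM hd γ).2 mb
    have hm₀' : bar m₀ γ = mb := hm₀
    simp only [vslash, heckeRep, heckeT, Pi.smul_apply, smul_eq_mul, Matrix.mulVec,
      dotProduct, inv_inv, ite_mul, zero_mul]
    rw [Fintype.sum_prod_type_right]
    have hswap : ∀ m' : Delta M,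
        (∑ j : ι, if mb = bar m' γ then ρ (coc m' γ)⁻¹ i j * mslash k m'.1 f (γ • τ) j else 0)
          = if mb = bar m' γ then
              ∑ j : ι, ρ (coc m' γ)⁻¹ i j * mslash k m'.1 f (γ • τ) j else 0 := by
      intro m'
      split_ifs <;> simp
    simp only [hswap]
    rw [Finset.sum_eq_single m₀ ?side1 ?side2]
    case side1 =>
      intro b _ hb
      rw [if_neg]
      intro hcon
      exact hb ((bar_bijective hM hd γ).1 (show (fun m => bar m γ) b = (fun m => bar m γ) m₀ from (hm₀'.trans hcon).symm))
    case side2 =>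
      intro hmem
      exact absurd (Finset.mem_univ m₀) hmem
    rw [if_pos hm₀'.symm]
    have hkey := key_step hM k ρ hd hslash m₀ γ τ i
    rw [hm₀'] at hkey
    exact hkey
  · intro p
    have h2 := p.2.2
    have ha : 0 < p.2.1 0 0 := h2.2.1
    have hdm : 0 < p.2.1 1 1 := lt_of_le_of_lt h2.2.2.2.1 h2.2.2.2.2
    exact mslash_bounded k ha hdm p.1 (hbdd p.1)
end
end

section
/- Fix a positive integer M, finite-dimensional SL₂(ℤ)-representations ρ and σ with finite index kernels, and weights k, l ∈ ℤ. Let π_{M,ρ,σ} : (T_M ρ) ⊗ (T_M σ) → T_M(ρ ⊗ σ) be the homomorphism sending (v ⊗ 𝔢_m) ⊗ (w ⊗ 𝔢_{m′}) to (v ⊗ w) ⊗ 𝔢_m if m = m′ and to 0 otherwise. Then postcomposition with π_{M,ρ,σ} maps M_k(T_M ρ ⊗ T_M σ) into M_k(T_M(ρ ⊗ σ)), and for all f ∈ M_k(ρ) and g ∈ M_l(σ) one has π_{M,ρ,σ} ∘ ((T_M f) ⊗ (T_M g)) = T_M(f ⊗ g). -/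
open scoped MatrixGroups Manifold Kronecker ComplexConjugate Classical ComplexOrder
open Matrix UpperHalfPlane Complex Filter MeasureTheory CongruenceSubgroup

noncomputable section

namespace VVMF

section Helpers

variable {ι κ : Type*} [Fintype ι] [Fintype κ]

lemma projEntry (M : ℕ) (p : (ι × κ) × Delta M) (q : (ι × Delta M) × (κ × Delta M)) :
    heckeTenProj ι κ M p q =
      if p = ((q.1.1, q.2.1), q.1.2) ∧ q.1.2 = q.2.2 then 1 else 0 := by
  rcases p with ⟨⟨i, j⟩, m⟩
  rcases q with ⟨⟨i', m'⟩, ⟨j', m''⟩⟩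
  show (if i = i' ∧ j = j' ∧ m = m' ∧ m' = m'' then (1:ℂ) else 0) = _
  by_cases h : i = i' ∧ j = j' ∧ m = m' ∧ m' = m''
  · rw [if_pos h, if_pos]
    exact ⟨by simp [h.1, h.2.1, h.2.2.1], h.2.2.2⟩
  · rw [if_neg h, if_neg]
    simp only [Prod.mk.injEq, not_and] at h ⊢
    intro h1 h2
    exact h h1.1.1 h1.1.2 h1.2 h2

lemma projMulVec (M : ℕ) (v : (ι × Delta M) × (κ × Delta M) → ℂ) (i : ι) (j : κ)
    (m : Delta M) :
    (heckeTenProj ι κ M).mulVec v ((i, j), m) = v ((i, m), (j, m)) := by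
  unfold Matrix.mulVec dotProduct
  have h : ∀ q : (ι × Delta M) × (κ × Delta M),
      heckeTenProj ι κ M ((i, j), m) q * v q =
        if q = ((i, m), (j, m)) then v q else 0 := by
    intro q
    rcases q with ⟨⟨i', m'⟩, ⟨j', m''⟩⟩
    rw [projEntry]
    simp only [Prod.mk.injEq]
    split_ifs <;> simp_all
  rw [Finset.sum_congr rfl (fun q _ => h q), Finset.sum_ite_eq']
  simp

set_option maxHeartbeats 1000000 in
lemma delta_unique (M : ℕ) (hM : 0 < M) (m m' : Delta M) (S : SL(2, ℤ))
    (h : m'.1 = (S : GL2ℤ) * m.1) : m' = m := by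
  obtain ⟨hc, ha, hdet, hb0, hbd⟩ := m.2
  obtain ⟨hc', ha', hdet', hb0', hbd'⟩ := m'.2
  have hdS : (S : GL2ℤ) 0 0 * (S : GL2ℤ) 1 1 - (S : GL2ℤ) 0 1 * (S : GL2ℤ) 1 0 = 1 := by
    have := S.2
    rwa [Matrix.det_fin_two] at this
  have hMpos : (0 : ℤ) < (M : ℤ) := by exact_mod_cast hM
  have hd0 : 0 < m.1 1 1 := by nlinarith
  have e00 : m'.1 0 0 = (S : GL2ℤ) 0 0 * m.1 0 0 := by
    rw [h, Matrix.mul_apply, Fin.sum_univ_two, hc, mul_zero, add_zero]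
  have e01 : m'.1 0 1 = (S : GL2ℤ) 0 0 * m.1 0 1 + (S : GL2ℤ) 0 1 * m.1 1 1 := by
    rw [h, Matrix.mul_apply, Fin.sum_univ_two]
  have e10 : (0 : ℤ) = (S : GL2ℤ) 1 0 * m.1 0 0 := by
    rw [← hc', h, Matrix.mul_apply, Fin.sum_univ_two, hc, mul_zero, add_zero]
  have e11 : m'.1 1 1 = (S : GL2ℤ) 1 0 * m.1 0 1 + (S : GL2ℤ) 1 1 * m.1 1 1 := by
    rw [h, Matrix.mul_apply, Fin.sum_univ_two]
  have hs10 : (S : GL2ℤ) 1 0 = 0 := by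
    rcases mul_eq_zero.1 e10.symm with h' | h'
    · exact h'
    · omega
  have hs : (S : GL2ℤ) 0 0 * (S : GL2ℤ) 1 1 = 1 := by rw [hs10] at hdS; linarith
  have hs00pos : 0 < (S : GL2ℤ) 0 0 := by nlinarith
  have hs00 : (S : GL2ℤ) 0 0 = 1 :=
    Int.eq_one_of_mul_eq_one_right hs00pos.le hs
  have hs11 : (S : GL2ℤ) 1 1 = 1 := by rw [hs00, one_mul] at hs; exact hs
  have ed : m'.1 1 1 = m.1 1 1 := by rw [e11, hs10, hs11]; ring
  have hs01 : (S : GL2ℤ) 0 1 = 0 := by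
    rcases lt_trichotomy ((S : GL2ℤ) 0 1) 0 with h' | h' | h'
    · have h'' : (S : GL2ℤ) 0 1 ≤ -1 := by omega
      have hm := mul_le_mul_of_nonneg_right h'' hd0.le
      rw [e01, hs00, one_mul] at hbd' hb0'
      linarith
    · exact h'
    · have h'' : 1 ≤ (S : GL2ℤ) 0 1 := by omega
      have hm := mul_le_mul_of_nonneg_right h'' hd0.le
      rw [e01, hs00, one_mul] at hbd' hb0'
      rw [ed] at hbd'
      linarith
  apply Subtype.ext
  ext x y
  fin_cases x <;> fin_cases y
  · show m'.1 0 0 = m.1 0 0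
    rw [e00, hs00, one_mul]
  · show m'.1 0 1 = m.1 0 1
    rw [e01, hs00, hs01]; ring
  · show m'.1 1 0 = m.1 1 0
    rw [hc, hc']
  · exact ed

lemma bar_inj {M : ℕ} (hM : 0 < M) {bar : Delta M → SL(2, ℤ) → Delta M}
    {coc : Delta M → SL(2, ℤ) → SL(2, ℤ)} (hd : HeckeData M bar coc)
    (γ : SL(2, ℤ)) {m m' : Delta M} (h : bar m γ = bar m' γ) : m = m' := by
  have h1 := hd m γ
  have h2 := hd m' γ
  rw [← h] at h2
  set C := coc m γ with hC
  set C' := coc m' γ with hC'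
  have hCinv : ((C⁻¹ : SL(2, ℤ)) : GL2ℤ) * (C : GL2ℤ) = 1 := by
    rw [← Matrix.SpecialLinearGroup.coe_mul, inv_mul_cancel,
      Matrix.SpecialLinearGroup.coe_one]
  have hγinv : ((γ : SL(2, ℤ)) : GL2ℤ) * ((γ⁻¹ : SL(2, ℤ)) : GL2ℤ) = 1 := by
    rw [← Matrix.SpecialLinearGroup.coe_mul, mul_inv_cancel,
      Matrix.SpecialLinearGroup.coe_one]
  have hB : (bar m γ).1 = ((C⁻¹ : SL(2, ℤ)) : GL2ℤ) * (m.1 * (γ : GL2ℤ)) := by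
    rw [← h1, ← mul_assoc, hCinv, one_mul]
  rw [hB] at h2
  have key : m'.1 = ((C' * C⁻¹ : SL(2, ℤ)) : GL2ℤ) * m.1 := by
    have h3 := congrArg (fun X => X * ((γ⁻¹ : SL(2, ℤ)) : GL2ℤ)) h2
    simp only [mul_assoc, hγinv, mul_one] at h3
    rw [Matrix.SpecialLinearGroup.coe_mul, mul_assoc]
    exact h3.symm
  exact (delta_unique M hM m m' (C' * C⁻¹) key).symm

lemma intertwine {M : ℕ} (hM : 0 < M)
    (ρ : SL(2, ℤ) → Matrix ι ι ℂ) (σ : SL(2, ℤ) → Matrix κ κ ℂ)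
    {bar : Delta M → SL(2, ℤ) → Delta M} {coc : Delta M → SL(2, ℤ) → SL(2, ℤ)}
    (hd : HeckeData M bar coc) (δ : SL(2, ℤ)) :
    heckeRep M (fun γ => ρ γ ⊗ₖ σ γ) bar coc δ * heckeTenProj ι κ M =
      heckeTenProj ι κ M * (heckeRep M ρ bar coc δ ⊗ₖ heckeRep M σ bar coc δ) := by
  ext p q
  rcases p with ⟨⟨i, j⟩, m⟩
  rcases q with ⟨⟨i', m'⟩, ⟨j', m''⟩⟩
  rw [Matrix.mul_apply, Matrix.mul_apply]
  have hL : ∀ r : (ι × κ) × Delta M,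
      heckeRep M (fun γ => ρ γ ⊗ₖ σ γ) bar coc δ ((i, j), m) r *
        heckeTenProj ι κ M r ((i', m'), (j', m'')) =
      if r = ((i', j'), m') then
        (if m' = m'' then
          heckeRep M (fun γ => ρ γ ⊗ₖ σ γ) bar coc δ ((i, j), m) r
        else 0) else 0 := by
    intro r
    rcases r with ⟨⟨a, b⟩, c⟩
    rw [projEntry]
    simp only [Prod.mk.injEq]
    split_ifs <;> first | tauto | rw [mul_one] | rw [mul_zero]
  have hR : ∀ r : (ι × Delta M) × (κ × Delta M),
      heckeTenProj ι κ M ((i, j), m) r *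
        (heckeRep M ρ bar coc δ ⊗ₖ heckeRep M σ bar coc δ) r ((i', m'), (j', m'')) =
      if r = ((i, m), (j, m)) then
        (heckeRep M ρ bar coc δ ⊗ₖ heckeRep M σ bar coc δ) r ((i', m'), (j', m''))
      else 0 := by
    intro r
    rcases r with ⟨⟨a, b⟩, ⟨c, d⟩⟩
    rw [projEntry]
    simp only [Prod.mk.injEq]
    split_ifs with h1 h2 h2
    · rw [one_mul]
    · obtain ⟨⟨⟨e1, e2⟩, e3⟩, e4⟩ := h1
      exact absurd ⟨⟨e1.symm, e3.symm⟩, e2.symm, e4.symm.trans e3.symm⟩ h2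
    · obtain ⟨⟨e1, e2⟩, ⟨e3, e4⟩⟩ := h2
      exact absurd ⟨⟨⟨e1.symm, e3.symm⟩, e2.symm⟩, e2.trans e4.symm⟩ h1
    · rw [zero_mul]
  rw [Finset.sum_congr rfl (fun r _ => hL r), Finset.sum_ite_eq',
    Finset.sum_congr rfl (fun r _ => hR r), Finset.sum_ite_eq']
  simp only [Finset.mem_univ, if_true]
  by_cases h2 : m' = m''
  · subst h2
    by_cases h3 : m = bar m' δ⁻¹
    · simp [heckeRep, h3, Matrix.kroneckerMap_apply]
    · simp [heckeRep, h3, Matrix.kroneckerMap_apply]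
  · rw [if_neg h2]
    simp only [Matrix.kroneckerMap_apply, heckeRep]
    by_cases h3 : m = bar m' δ⁻¹
    · by_cases h4 : m = bar m'' δ⁻¹
      · exact absurd (bar_inj hM hd δ⁻¹ (h3.symm.trans h4)) h2
      · rw [if_neg h4, mul_zero]
    · rw [if_neg h3, zero_mul]

end Helpers

end VVMF

open VVMF

/-- Postcomposition with `π_{M,ρ,σ} : (T_M ρ) ⊗ (T_M σ) → T_M (ρ ⊗ σ)`
maps `M_k(T_M ρ ⊗ T_M σ)` into `M_k(T_M (ρ ⊗ σ))`, and
`π_{M,ρ,σ} ∘ ((T_M f) ⊗ (T_M g)) = T_M (f ⊗ g)` for `f ∈ M_k(ρ)`, `g ∈ M_l(σ)`. -/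
theorem hecke_tensor_compatibility {ι κ : Type*} [Fintype ι] [Fintype κ]
    (M : ℕ) (hM : 0 < M) (k l : ℤ)
    (ρ : SL(2, ℤ) → Matrix ι ι ℂ) (σ : SL(2, ℤ) → Matrix κ κ ℂ)
    (hρ : IsRep ρ) (hσ : IsRep σ)
    (hfinρ : (repKer ρ hρ).FiniteIndex) (hfinσ : (repKer σ hσ).FiniteIndex)
    (bar : Delta M → SL(2, ℤ) → Delta M) (coc : Delta M → SL(2, ℤ) → SL(2, ℤ))
    (hd : HeckeData M bar coc) :
    (∀ F : ℍ → (ι × Delta M) × (κ × Delta M) → ℂ,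
      IsVModForm k (fun γ => heckeRep M ρ bar coc γ ⊗ₖ heckeRep M σ bar coc γ) F →
      IsVModForm k (heckeRep M (fun γ => ρ γ ⊗ₖ σ γ) bar coc)
        (fun τ => (heckeTenProj ι κ M).mulVec (F τ))) ∧
    (∀ (f : ℍ → ι → ℂ) (g : ℍ → κ → ℂ), IsVModForm k ρ f → IsVModForm l σ g →
      (fun τ => (heckeTenProj ι κ M).mulVec (tensorF (heckeT M k f) (heckeT M l g) τ)) =
        heckeT M (k + l) (tensorF f g)) := by
  constructor
  · rintro F ⟨hdiff, hslash, hbdd⟩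
    refine ⟨?_, ?_, ?_⟩
    · rintro ⟨⟨i, j⟩, m⟩
      simp only [projMulVec]
      exact hdiff _
    · intro γ
      funext τ
      show (denomZ γ τ) ^ (-k) •
          (heckeRep M (fun γ => ρ γ ⊗ₖ σ γ) bar coc γ⁻¹).mulVec
            ((heckeTenProj ι κ M).mulVec (F (γ • τ))) =
        (heckeTenProj ι κ M).mulVec (F τ)
      rw [Matrix.mulVec_mulVec, intertwine hM ρ σ hd γ⁻¹, ← Matrix.mulVec_mulVec,
        ← Matrix.mulVec_smul]
      have h := congrFun (hslash γ) τ
      simp only [vslash] at h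
      exact congrArg (fun v => (heckeTenProj ι κ M).mulVec v) h
    · rintro ⟨⟨i, j⟩, m⟩
      simp only [projMulVec]
      exact hbdd _
  · intro f g hf hg
    funext τ
    funext p
    obtain ⟨⟨i, j⟩, m⟩ := p
    rw [projMulVec]
    simp only [tensorF, heckeT, mslash, Pi.smul_apply, smul_eq_mul]
    have ha : (0 : ℤ) < m.1 0 0 := m.2.2.1
    have hMpos : (0 : ℤ) < (M : ℤ) := by exact_mod_cast hM
    have hdpos : (0 : ℤ) < m.1 1 1 := by nlinarith [m.2.2.2.1]
    have hx : (0 : ℝ) < ((m.1 0 0 : ℤ) : ℝ) / ((m.1 1 1 : ℤ) : ℝ) := by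
      apply div_pos <;> exact_mod_cast (by assumption)
    have key : ((((((m.1 0 0 : ℤ) : ℝ) / ((m.1 1 1 : ℤ) : ℝ)) ^ (((k + l : ℤ) : ℝ) / 2) : ℝ) : ℂ)) =
        ((((((m.1 0 0 : ℤ) : ℝ) / ((m.1 1 1 : ℤ) : ℝ)) ^ ((k : ℝ) / 2) : ℝ) : ℂ)) *
        ((((((m.1 0 0 : ℤ) : ℝ) / ((m.1 1 1 : ℤ) : ℝ)) ^ ((l : ℝ) / 2) : ℝ) : ℂ)) := by
      rw [← Complex.ofReal_mul, ← Real.rpow_add hx]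
      congr 2
      push_cast
      ring
    rw [key]
    ring
end
end

section
/- For every positive integer M there is an isomorphism of SL₂(ℤ)-representations T_M 𝟙 ≅ ⊕_{a : a²|M} Ind_{Γ₀(M/a²)} 𝟙, where a runs over the positive integers whose square divides M. -/
open scoped MatrixGroups Manifold Kronecker ComplexConjugate Classical ComplexOrder
open Matrix UpperHalfPlane Complex Filter MeasureTheory CongruenceSubgroup

noncomputable section

namespace HeckeDecompAux

open VVMF Matrix

/-- Uniqueness of the Hermite normal form in `Δ_M`. -/
lemma delta_unique {M : ℕ} (δ : SL(2, ℤ)) (n₁ n₂ : Delta M)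
    (h : (δ : GL2ℤ) * n₁.1 = n₂.1) : n₁ = n₂ := by
  obtain ⟨h10, hpos, hdet, hb0, hbd⟩ := n₁.2
  obtain ⟨h10', hpos', hdet', hb0', hbd'⟩ := n₂.2
  have hδ : (δ : GL2ℤ) 0 0 * (δ : GL2ℤ) 1 1 - (δ : GL2ℤ) 0 1 * (δ : GL2ℤ) 1 0 = 1 := by
    have h2 := δ.2
    rwa [Matrix.det_fin_two] at h2
  have e00 := congrFun (congrFun h 0) 0
  have e01 := congrFun (congrFun h 0) 1
  have e10 := congrFun (congrFun h 1) 0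
  have e11 := congrFun (congrFun h 1) 1
  rw [Matrix.mul_apply, Fin.sum_univ_two] at e00 e01 e10 e11
  rw [h10] at e00 e10
  rw [mul_zero, add_zero] at e00 e10
  rw [h10'] at e10
  have hr : (δ : GL2ℤ) 1 0 = 0 := by
    rcases mul_eq_zero.mp e10 with h' | h'
    · exact h'
    · omega
  rw [hr] at hδ e11
  rw [mul_zero, sub_zero] at hδ
  rw [zero_mul, zero_add] at e11
  have ppos : 0 < (δ : GL2ℤ) 0 0 := by nlinarith
  have hp : (δ : GL2ℤ) 0 0 = 1 := Int.eq_one_of_mul_eq_one_right ppos.le hδ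
  have hs : (δ : GL2ℤ) 1 1 = 1 := by nlinarith
  rw [hp, one_mul] at e00 e01
  rw [hs, one_mul] at e11
  have hq : (δ : GL2ℤ) 0 1 = 0 := by
    rcases lt_trichotomy ((δ : GL2ℤ) 0 1) 0 with h' | h' | h'
    · exfalso
      have h'' : (δ : GL2ℤ) 0 1 ≤ -1 := by omega
      nlinarith
    · exact h'
    · exfalso
      have h'' : 1 ≤ (δ : GL2ℤ) 0 1 := by omega
      nlinarith
  rw [hq, zero_mul, add_zero] at e01
  apply Subtype.ext
  ext i j
  fin_cases i <;> fin_cases j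
  · simpa using e00
  · simpa using e01
  · show n₁.1 1 0 = n₂.1 1 0
    rw [h10, h10']
  · simpa using e11

lemma delta_unique' {M : ℕ} (δ₁ δ₂ : SL(2, ℤ)) (n₁ n₂ : Delta M)
    (h : (δ₁ : GL2ℤ) * n₁.1 = (δ₂ : GL2ℤ) * n₂.1) : n₁ = n₂ := by
  apply delta_unique (δ₂⁻¹ * δ₁) n₁ n₂
  rw [Matrix.SpecialLinearGroup.coe_mul, mul_assoc, h, ← mul_assoc,
    ← Matrix.SpecialLinearGroup.coe_mul, inv_mul_cancel,
    Matrix.SpecialLinearGroup.coe_one, one_mul]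

variable {M : ℕ} {bar : Delta M → SL(2, ℤ) → Delta M}
  {coc : Delta M → SL(2, ℤ) → SL(2, ℤ)}

lemma bar_one (hd : HeckeData M bar coc) (m : Delta M) : bar m 1 = m := by
  apply delta_unique' (coc m 1) 1
  rw [hd m 1, Matrix.SpecialLinearGroup.coe_one, one_mul, mul_one]

lemma bar_mul (hd : HeckeData M bar coc) (m : Delta M) (γ δ : SL(2, ℤ)) :
    bar (bar m γ) δ = bar m (γ * δ) := by
  apply delta_unique' (coc m γ * coc (bar m γ) δ) (coc m (γ * δ))
  rw [Matrix.SpecialLinearGroup.coe_mul, mul_assoc, hd (bar m γ) δ, ← mul_assoc,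
    hd m γ, hd m (γ * δ), Matrix.SpecialLinearGroup.coe_mul, mul_assoc]

lemma bar_cancel (hd : HeckeData M bar coc) (m : Delta M) (γ : SL(2, ℤ)) :
    bar (bar m γ) γ⁻¹ = m := by
  rw [bar_mul hd, mul_inv_cancel, bar_one hd]

lemma bar_cancel' (hd : HeckeData M bar coc) (m : Delta M) (γ : SL(2, ℤ)) :
    bar (bar m γ⁻¹) γ = m := by
  rw [bar_mul hd, inv_mul_cancel, bar_one hd]

/-! ### The entry gcd -/

/-- The gcd of the four entries of an integer matrix. -/
def dgcd (m : GL2ℤ) : ℕ :=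
  Int.gcd (m 0 0) (Int.gcd (m 0 1) (Int.gcd (m 1 0) (m 1 1)))

lemma dgcd_dvd (m : GL2ℤ) (i j : Fin 2) : (dgcd m : ℤ) ∣ m i j := by
  have h1 : (dgcd m : ℤ) ∣ m 0 0 := Int.gcd_dvd_left _ _
  have h2 : (dgcd m : ℤ) ∣ (Int.gcd (m 0 1) (Int.gcd (m 1 0) (m 1 1)) : ℤ) :=
    Int.gcd_dvd_right _ _
  have h3 : (dgcd m : ℤ) ∣ m 0 1 := h2.trans (Int.gcd_dvd_left _ _)
  have h4 : (dgcd m : ℤ) ∣ (Int.gcd (m 1 0) (m 1 1) : ℤ) := h2.trans (Int.gcd_dvd_right _ _)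
  fin_cases i <;> fin_cases j
  · exact h1
  · exact h3
  · exact h4.trans (Int.gcd_dvd_left _ _)
  · exact h4.trans (Int.gcd_dvd_right _ _)

lemma dvd_dgcd (m : GL2ℤ) (k : ℤ) (h : ∀ i j, k ∣ m i j) : k ∣ (dgcd m : ℤ) :=
  Int.dvd_coe_gcd (h 0 0) (Int.dvd_coe_gcd (h 0 1) (Int.dvd_coe_gcd (h 1 0) (h 1 1)))

lemma dgcd_mul_left_dvd (u : SL(2, ℤ)) (m : GL2ℤ) :
    (dgcd m : ℤ) ∣ (dgcd ((u : GL2ℤ) * m) : ℤ) := by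
  apply dvd_dgcd
  intro i j
  rw [Matrix.mul_apply, Fin.sum_univ_two]
  exact dvd_add ((dgcd_dvd m 0 j).mul_left _) ((dgcd_dvd m 1 j).mul_left _)

lemma dgcd_mul_left (u : SL(2, ℤ)) (m : GL2ℤ) : dgcd ((u : GL2ℤ) * m) = dgcd m := by
  have h1 := dgcd_mul_left_dvd u m
  have h2 := dgcd_mul_left_dvd u⁻¹ ((u : GL2ℤ) * m)
  rw [← mul_assoc, ← Matrix.SpecialLinearGroup.coe_mul, inv_mul_cancel,
    Matrix.SpecialLinearGroup.coe_one, one_mul] at h2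
  exact Nat.dvd_antisymm (Int.natCast_dvd_natCast.mp h2) (Int.natCast_dvd_natCast.mp h1)

lemma dgcd_mul_right_dvd (u : SL(2, ℤ)) (m : GL2ℤ) :
    (dgcd m : ℤ) ∣ (dgcd (m * (u : GL2ℤ)) : ℤ) := by
  apply dvd_dgcd
  intro i j
  rw [Matrix.mul_apply, Fin.sum_univ_two]
  exact dvd_add ((dgcd_dvd m i 0).mul_right _) ((dgcd_dvd m i 1).mul_right _)

lemma dgcd_mul_right (u : SL(2, ℤ)) (m : GL2ℤ) : dgcd (m * (u : GL2ℤ)) = dgcd m := by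
  have h1 := dgcd_mul_right_dvd u m
  have h2 := dgcd_mul_right_dvd u⁻¹ (m * (u : GL2ℤ))
  rw [mul_assoc, ← Matrix.SpecialLinearGroup.coe_mul, mul_inv_cancel,
    Matrix.SpecialLinearGroup.coe_one, mul_one] at h2
  exact Nat.dvd_antisymm (Int.natCast_dvd_natCast.mp h2) (Int.natCast_dvd_natCast.mp h1)

lemma dgcd_bar (hd : HeckeData M bar coc) (m : Delta M) (γ : SL(2, ℤ)) :
    dgcd (bar m γ).1 = dgcd m.1 := by
  have h := hd m γ
  have : dgcd ((coc m γ : GL2ℤ) * (bar m γ).1) = dgcd (m.1 * (γ : GL2ℤ)) := by rw [h]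
  rwa [dgcd_mul_left, dgcd_mul_right] at this

lemma dgcd_pos (m : Delta M) : 0 < dgcd m.1 := by
  rcases Nat.eq_zero_or_pos (dgcd m.1) with h | h
  · exfalso
    have := dgcd_dvd m.1 0 0
    rw [h] at this
    have h00 := m.2.2.1
    simp only [Nat.cast_zero, zero_dvd_iff] at this
    omega
  · exact h

lemma dgcd_sq_dvd (m : Delta M) : dgcd m.1 * dgcd m.1 ∣ M := by
  have h1 := dgcd_dvd m.1 0 0
  have h2 := dgcd_dvd m.1 1 1
  have h3 : ((dgcd m.1 * dgcd m.1 : ℕ) : ℤ) ∣ (M : ℤ) := by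
    push_cast
    rw [← m.2.2.2.1]
    exact mul_dvd_mul h1 h2
  exact_mod_cast h3

/-! ### A coprime value in an arithmetic progression -/

lemma exists_coprime_ap (a b n : ℕ) (hn : n ≠ 0) (h : Nat.gcd (Nat.gcd a b) n = 1) :
    ∃ t : ℕ, Nat.Coprime (b + t * a) n := by
  classical
  let ps := n.primeFactors.filter (fun p => ¬ p ∣ b)
  refine ⟨ps.prod id, Nat.coprime_of_dvd fun p pp hp => fun hpn => ?_⟩
  have ppnat : p.Prime := pp
  by_cases hpb : p ∣ b
  · have hpa : ¬ p ∣ a := by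
      intro hpa
      have hd1 : p ∣ Nat.gcd (Nat.gcd a b) n := Nat.dvd_gcd (Nat.dvd_gcd hpa hpb) hpn
      rw [h] at hd1
      exact ppnat.one_lt.ne' (Nat.eq_one_of_dvd_one hd1)
    have hta : p ∣ ps.prod id * a := by
      have := Nat.dvd_sub hp hpb
      rwa [Nat.add_sub_cancel_left] at this
    rcases (Nat.Prime.dvd_mul ppnat).mp hta with h' | h'
    · obtain ⟨q, hq, hq'⟩ := ppnat.prime.exists_mem_finset_dvd h'
      have hq2 := Finset.mem_filter.mp hq
      have hqprime : q.Prime := (Nat.mem_primeFactors.mp hq2.1).1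
      have : p = q := (Nat.prime_dvd_prime_iff_eq ppnat hqprime).mp hq'
      exact hq2.2 (this ▸ hpb)
    · exact hpa h'
  · have pps : p ∈ ps :=
      Finset.mem_filter.mpr ⟨Nat.mem_primeFactors.mpr ⟨ppnat, hpn, hn⟩, hpb⟩
    have hpt : p ∣ ps.prod id * a := Dvd.dvd.mul_right (Finset.dvd_prod_of_mem id pps) a
    have : p ∣ b := by
      have := Nat.dvd_sub hp hpt
      rwa [Nat.add_sub_cancel] at this
    exact hpb this

/-! ### The representatives `diag(M/a, a)` -/

/-- The element `diag(M/a, a) ∈ Δ_M` for `a² ∣ M`. -/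
def mA (M : ℕ) (hM : 0 < M) (a : {a : ℕ // 0 < a ∧ a * a ∣ M}) : Delta M :=
  ⟨!![((M / a.1 : ℕ) : ℤ), 0; 0, (a.1 : ℤ)], by
    obtain ⟨ha, haM⟩ := a.2
    have haM' : a.1 ∣ M := (dvd_mul_right a.1 a.1).trans haM
    refine ⟨rfl, ?_, ?_, le_refl 0, ?_⟩
    · show (0:ℤ) < ((M / a.1 : ℕ) : ℤ)
      exact_mod_cast Nat.div_pos (Nat.le_of_dvd hM haM') ha
    · show ((M / a.1 : ℕ) : ℤ) * (a.1 : ℤ) = (M : ℤ)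
      exact_mod_cast Nat.div_mul_cancel haM'
    · show (0:ℤ) < (a.1 : ℤ)
      exact_mod_cast ha⟩

lemma mA_div {M : ℕ} (a : ℕ) (ha : 0 < a) (haM : a * a ∣ M) :
    M / a = a * (M / (a * a)) := by
  obtain ⟨k, hk⟩ := haM
  subst hk
  rw [Nat.mul_div_cancel_left _ (Nat.mul_pos ha ha), mul_assoc, Nat.mul_div_cancel_left _ ha]

lemma mA_cast {M : ℕ} (a : {a : ℕ // 0 < a ∧ a * a ∣ M}) :
    ((M / a.1 : ℕ) : ℤ) = (a.1 : ℤ) * ((M / (a.1 * a.1) : ℕ) : ℤ) := by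
  exact_mod_cast congrArg (Nat.cast : ℕ → ℤ) (mA_div a.1 a.2.1 a.2.2)

lemma mA_00 (M : ℕ) (hM : 0 < M) (a : {a : ℕ // 0 < a ∧ a * a ∣ M}) :
    (mA M hM a).1 0 0 = ((M / a.1 : ℕ) : ℤ) := rfl

lemma dgcd_mA (M : ℕ) (hM : 0 < M) (a : {a : ℕ // 0 < a ∧ a * a ∣ M}) :
    dgcd (mA M hM a).1 = a.1 := by
  have hdvd : a.1 ∣ M / a.1 := ⟨M / (a.1 * a.1), mA_div a.1 a.2.1 a.2.2⟩
  show Int.gcd ((M / a.1 : ℕ) : ℤ) (Int.gcd 0 (Int.gcd 0 (a.1 : ℤ))) = a.1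
  rw [Int.gcd_zero_left, Int.natAbs_natCast, Int.gcd_zero_left, Int.natAbs_natCast,
    Int.gcd_natCast_natCast]
  exact Nat.gcd_eq_right hdvd

/-- Conjugating `Γ₀(M/a²)` by `diag(M/a, a)`. -/
lemma exists_conj (M : ℕ) (hM : 0 < M) (a : {a : ℕ // 0 < a ∧ a * a ∣ M})
    (h : SL(2, ℤ)) (hmem : ((M / (a.1 * a.1) : ℕ) : ℤ) ∣ (h : GL2ℤ) 1 0) :
    ∃ δ : SL(2, ℤ), (δ : GL2ℤ) * (mA M hM a).1 = (mA M hM a).1 * (h : GL2ℤ) := by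
  obtain ⟨r', hr'⟩ := hmem
  have hdet : (h : GL2ℤ) 0 0 * (h : GL2ℤ) 1 1 - (h : GL2ℤ) 0 1 * (h : GL2ℤ) 1 0 = 1 := by
    have h2 := h.2
    rwa [Matrix.det_fin_two] at h2
  have hA := mA_cast a
  refine ⟨⟨!![(h : GL2ℤ) 0 0, ((M / (a.1 * a.1) : ℕ) : ℤ) * (h : GL2ℤ) 0 1;
      r', (h : GL2ℤ) 1 1], ?_⟩, ?_⟩
  · rw [Matrix.det_fin_two_of]
    linear_combination hdet + (h : GL2ℤ) 0 1 * hr'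
  · ext i j
    fin_cases i <;> fin_cases j <;>
      simp only [mA, Matrix.mul_apply, Fin.sum_univ_two, Fin.mk_zero, Fin.mk_one, Fin.isValue,
        Matrix.of_apply, Matrix.cons_val', Matrix.cons_val_zero, Matrix.cons_val_one,
        Matrix.head_cons, Matrix.head_fin_const, Matrix.empty_val', Matrix.cons_val_fin_one]
    · ring
    · rw [hA]; ring
    · rw [hA]; linear_combination (-(a.1 : ℤ)) * hr'
    · ring

/-- Well-definedness of `g ↦ bar (mA a) g` on right cosets of `Γ₀(M/a²)`. -/
lemma bar_mA_congr (hd : HeckeData M bar coc)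
    (hM : 0 < M) (a : {a : ℕ // 0 < a ∧ a * a ∣ M}) (g g' : SL(2, ℤ))
    (hmem : g' * g⁻¹ ∈ Gamma0 (M / (a.1 * a.1))) :
    bar (mA M hM a) g = bar (mA M hM a) g' := by
  have hmem' : ((M / (a.1 * a.1) : ℕ) : ℤ) ∣ ((g' * g⁻¹ : SL(2, ℤ)) : GL2ℤ) 1 0 := by
    rw [CongruenceSubgroup.Gamma0_mem] at hmem
    exact (ZMod.intCast_zmod_eq_zero_iff_dvd _ _).mp hmem
  obtain ⟨δ, hδ⟩ := exists_conj M hM a (g' * g⁻¹) hmem'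
  symm
  apply delta_unique' (coc (mA M hM a) g') (δ * coc (mA M hM a) g)
  rw [hd (mA M hM a) g', Matrix.SpecialLinearGroup.coe_mul, mul_assoc, hd (mA M hM a) g,
    ← mul_assoc, hδ, mul_assoc, ← Matrix.SpecialLinearGroup.coe_mul, inv_mul_cancel_right]

/-- If `bar (mA a) g = bar (mA a) g'`, then `g' g⁻¹ ∈ Γ₀(M/a²)`. -/
lemma gamma0_of_bar_eq (hd : HeckeData M bar coc)
    (hM : 0 < M) (a : {a : ℕ // 0 < a ∧ a * a ∣ M}) (g g' : SL(2, ℤ))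
    (hbar : bar (mA M hM a) g = bar (mA M hM a) g') :
    g' * g⁻¹ ∈ Gamma0 (M / (a.1 * a.1)) := by
  set η : SL(2, ℤ) := coc (mA M hM a) g' * (coc (mA M hM a) g)⁻¹ with hη
  have h1 := hd (mA M hM a) g
  have h2 := hd (mA M hM a) g'
  rw [hbar] at h1
  have E1 : (η : GL2ℤ) * ((mA M hM a).1 * (g : GL2ℤ)) = (mA M hM a).1 * (g' : GL2ℤ) := by
    rw [← h1, ← mul_assoc, ← Matrix.SpecialLinearGroup.coe_mul, hη, inv_mul_cancel_right, h2]
  have hgg : (mA M hM a).1 = ((mA M hM a).1 * (g : GL2ℤ)) * ((g⁻¹ : SL(2, ℤ)) : GL2ℤ) := by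
    rw [mul_assoc, ← Matrix.SpecialLinearGroup.coe_mul, mul_inv_cancel,
      Matrix.SpecialLinearGroup.coe_one, mul_one]
  have E : (η : GL2ℤ) * (mA M hM a).1 = (mA M hM a).1 * ((g' * g⁻¹ : SL(2, ℤ)) : GL2ℤ) := by
    conv_lhs => rw [hgg]
    rw [← mul_assoc, E1, mul_assoc, ← Matrix.SpecialLinearGroup.coe_mul]
  have e10 := congrFun (congrFun E 1) 0
  rw [Matrix.mul_apply, Fin.sum_univ_two, Matrix.mul_apply, Fin.sum_univ_two] at e10
  have hm00 : (mA M hM a).1 0 0 = ((M / a.1 : ℕ) : ℤ) := rfl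
  have hm10 : (mA M hM a).1 1 0 = 0 := rfl
  have hm11 : (mA M hM a).1 1 1 = (a.1 : ℤ) := rfl
  rw [hm00, hm10, hm11, mul_zero, add_zero, zero_mul, zero_add, mA_cast a] at e10
  have haZ : ((a.1 : ℤ)) ≠ 0 := by
    have := a.2.1
    positivity
  have hdvd : ((M / (a.1 * a.1) : ℕ) : ℤ) ∣ ((g' * g⁻¹ : SL(2, ℤ)) : GL2ℤ) 1 0 := by
    refine ⟨(η : GL2ℤ) 1 0, ?_⟩
    apply mul_left_cancel₀ haZ
    rw [← e10]
    ring
  rw [CongruenceSubgroup.Gamma0_mem]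
  rw [show ((g' * g⁻¹ : SL(2, ℤ)) 1 0 : ℤ) = ((g' * g⁻¹ : SL(2, ℤ)) : GL2ℤ) 1 0 from rfl]
  exact (ZMod.intCast_zmod_eq_zero_iff_dvd _ _).mpr hdvd

/-! ### The bijection -/

/-- The bijection `⨿_a Γ₀(M/a²)\SL(2,ℤ) → Δ_M`. -/
def Phi (M : ℕ) (hM : 0 < M) (bar : Delta M → SL(2, ℤ) → Delta M)
    (coc : Delta M → SL(2, ℤ) → SL(2, ℤ)) (hd : HeckeData M bar coc)
    (p : Σ a : {a : ℕ // 0 < a ∧ a * a ∣ M}, Cos (Gamma0 (M / (a.1 * a.1)))) : Delta M :=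
  Quotient.lift (fun g => bar (mA M hM p.1) g)
    (fun g g' hgg => bar_mA_congr hd hM p.1 g g'
      (QuotientGroup.rightRel_apply.mp hgg)) p.2

lemma Phi_mk (hd : HeckeData M bar coc) (hM : 0 < M)
    (a : {a : ℕ // 0 < a ∧ a * a ∣ M}) (g : SL(2, ℤ)) :
    Phi M hM bar coc hd ⟨a, mkCos _ g⟩ = bar (mA M hM a) g := rfl

lemma Phi_cosMul (hd : HeckeData M bar coc) (hM : 0 < M)
    (p : Σ a : {a : ℕ // 0 < a ∧ a * a ∣ M}, Cos (Gamma0 (M / (a.1 * a.1))))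
    (γ : SL(2, ℤ)) :
    Phi M hM bar coc hd ⟨p.1, cosMul _ p.2 γ⟩ = bar (Phi M hM bar coc hd p) γ := by
  obtain ⟨a, c⟩ := p
  induction c using Quotient.ind with
  | _ g =>
    show bar (mA M hM a) (g * γ) = bar (bar (mA M hM a) g) γ
    rw [bar_mul hd]

lemma Phi_inj (hd : HeckeData M bar coc) (hM : 0 < M) :
    Function.Injective (Phi M hM bar coc hd) := by
  rintro ⟨a, c⟩ ⟨a', c'⟩ hpq
  obtain ⟨g, rfl⟩ := Quotient.exists_rep c
  obtain ⟨g', rfl⟩ := Quotient.exists_rep c'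
  have hbar : bar (mA M hM a) g = bar (mA M hM a') g' := hpq
  have haa : a = a' := by
    apply Subtype.ext
    have h1 : dgcd (bar (mA M hM a) g).1 = a.1 := by rw [dgcd_bar hd, dgcd_mA]
    have h2 : dgcd (bar (mA M hM a') g').1 = a'.1 := by rw [dgcd_bar hd, dgcd_mA]
    rw [← h1, ← h2, hbar]
  subst haa
  have hbar' : bar (mA M hM a) g = bar (mA M hM a) g' := hbar
  exact congrArg (fun c => (⟨a, c⟩ : Σ a : {a : ℕ // 0 < a ∧ a * a ∣ M},
      Cos (Gamma0 (M / (a.1 * a.1)))))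
    (Quotient.sound (QuotientGroup.rightRel_apply.mpr (gamma0_of_bar_eq hd hM a g g' hbar')))

lemma Phi_surj (hd : HeckeData M bar coc) (hM : 0 < M) :
    Function.Surjective (Phi M hM bar coc hd) := by
  intro m
  obtain ⟨hc10, hαpos, hdet, hβ0, hβd⟩ := m.2
  have haPos : 0 < dgcd m.1 := dgcd_pos m
  have haM : dgcd m.1 * dgcd m.1 ∣ M := dgcd_sq_dvd m
  obtain ⟨α₁, hα1⟩ := dgcd_dvd m.1 0 0
  obtain ⟨β₁, hβ1⟩ := dgcd_dvd m.1 0 1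
  obtain ⟨D₁, hD1⟩ := dgcd_dvd m.1 1 1
  set aN : ℕ := dgcd m.1 with haN
  have haZ : (0:ℤ) < (aN : ℤ) := by exact_mod_cast haPos
  have hα₁pos : 0 < α₁ := by nlinarith
  have hβ₁0 : 0 ≤ β₁ := by nlinarith
  have hD₁pos : 0 < D₁ := by nlinarith
  -- primitivity of (α₁, β₁, D₁)
  have hprim : Nat.gcd (Nat.gcd α₁.toNat β₁.toNat) D₁.toNat = 1 := by
    set e := Nat.gcd (Nat.gcd α₁.toNat β₁.toNat) D₁.toNat with he
    have ha' : (e : ℤ) ∣ α₁ := by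
      have h1 : e ∣ α₁.toNat := (Nat.gcd_dvd_left _ _).trans (Nat.gcd_dvd_left _ _)
      have h2 := Int.natCast_dvd_natCast.mpr h1
      rwa [Int.toNat_of_nonneg hα₁pos.le] at h2
    have hb' : (e : ℤ) ∣ β₁ := by
      have h1 : e ∣ β₁.toNat := (Nat.gcd_dvd_left _ _).trans (Nat.gcd_dvd_right _ _)
      have h2 := Int.natCast_dvd_natCast.mpr h1
      rwa [Int.toNat_of_nonneg hβ₁0] at h2
    have hn' : (e : ℤ) ∣ D₁ := by
      have h1 : e ∣ D₁.toNat := Nat.gcd_dvd_right _ _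
      have h2 := Int.natCast_dvd_natCast.mpr h1
      rwa [Int.toNat_of_nonneg hD₁pos.le] at h2
    have hdvd : ((e : ℤ) * (aN : ℤ)) ∣ ((dgcd m.1 : ℕ) : ℤ) := by
      apply dvd_dgcd
      intro i j
      fin_cases i <;> fin_cases j
      · show ((e : ℤ) * (aN : ℤ)) ∣ m.1 0 0
        rw [hα1, mul_comm (e : ℤ)]
        exact mul_dvd_mul_left _ ha'
      · show ((e : ℤ) * (aN : ℤ)) ∣ m.1 0 1
        rw [hβ1, mul_comm (e : ℤ)]
        exact mul_dvd_mul_left _ hb'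
      · show ((e : ℤ) * (aN : ℤ)) ∣ m.1 1 0
        rw [hc10]
        exact dvd_zero _
      · show ((e : ℤ) * (aN : ℤ)) ∣ m.1 1 1
        rw [hD1, mul_comm (e : ℤ)]
        exact mul_dvd_mul_left _ hn'
    have hdvdN : e * aN ∣ aN := by
      have : ((e * aN : ℕ) : ℤ) ∣ ((aN : ℕ) : ℤ) := by push_cast; exact hdvd
      exact_mod_cast this
    have hle : e * aN ≤ aN := Nat.le_of_dvd haPos hdvdN
    have hene : e ≠ 0 := by
      intro h0
      rw [h0] at he
      have := (Nat.gcd_eq_zero_iff.mp he.symm).2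
      omega
    nlinarith [Nat.one_le_iff_ne_zero.mpr hene]
  have hDtoNat : D₁.toNat ≠ 0 := by omega
  obtain ⟨t, ht⟩ := exists_coprime_ap α₁.toNat β₁.toNat D₁.toNat hDtoNat hprim
  set q : ℤ := -(β₁ + (t : ℤ) * α₁) with hq
  have hcop : IsCoprime q D₁ := by
    apply IsCoprime.neg_left
    rw [Int.isCoprime_iff_gcd_eq_one]
    have hx : β₁ + (t : ℤ) * α₁ = ((β₁.toNat + t * α₁.toNat : ℕ) : ℤ) := by
      push_cast [Int.toNat_of_nonneg hβ₁0, Int.toNat_of_nonneg hα₁pos.le]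
      ring
    rw [hx, show D₁ = ((D₁.toNat : ℕ) : ℤ) from (Int.toNat_of_nonneg hD₁pos.le).symm,
      Int.gcd_natCast_natCast]
    exact ht
  obtain ⟨u, v, huv⟩ := hcop
  set δ : SL(2, ℤ) := ⟨!![D₁, q; -u, v], by
    rw [Matrix.det_fin_two_of]; linear_combination huv⟩ with hδdef
  set g : SL(2, ℤ) := ⟨!![1, -(t : ℤ); -u * α₁, -u * β₁ + v * D₁], by
    rw [Matrix.det_fin_two_of]; linear_combination huv - u * hq⟩ with hgdef
  have haPair : 0 < aN ∧ aN * aN ∣ M := ⟨haPos, haM⟩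
  have hA : ((M / aN : ℕ) : ℤ) = (aN : ℤ) * (α₁ * D₁) := by
    have h1 : ((M / aN : ℕ) : ℤ) * (aN : ℤ) = (M : ℤ) := by
      exact_mod_cast Nat.div_mul_cancel ((dvd_mul_right aN aN).trans haM)
    have h2 : (M : ℤ) = ((aN : ℤ) * (α₁ * D₁)) * (aN : ℤ) := by
      rw [← hdet, hα1, hD1]; ring
    exact mul_right_cancel₀ haZ.ne' (h1.trans h2)
  have E : (δ : GL2ℤ) * m.1 = (mA M hM ⟨aN, haPair⟩).1 * (g : GL2ℤ) := by
    ext i j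
    fin_cases i <;> fin_cases j <;>
      simp only [mA, Matrix.mul_apply, Fin.sum_univ_two, Fin.mk_zero, Fin.mk_one, Fin.isValue,
        Matrix.of_apply, Matrix.cons_val', Matrix.cons_val_zero, Matrix.cons_val_one,
        Matrix.head_cons, Matrix.head_fin_const, Matrix.empty_val', Matrix.cons_val_fin_one,
          hδdef, hgdef, Matrix.SpecialLinearGroup.coe_mk]
    · rw [hA]; linear_combination D₁ * hα1 + q * hc10
    · rw [hA]; linear_combination D₁ * hβ1 + q * hD1 + (aN : ℤ) * D₁ * hq
    · linear_combination (-u) * hα1 + v * hc10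
    · linear_combination (-u) * hβ1 + v * hD1
  refine ⟨⟨⟨aN, haPair⟩, mkCos _ g⟩, ?_⟩
  show bar (mA M hM ⟨aN, haPair⟩) g = m
  apply delta_unique' (coc (mA M hM ⟨aN, haPair⟩) g) δ
  rw [hd (mA M hM ⟨aN, haPair⟩) g, E]

/-- Computation of the `T_M 𝟙` action on basis functions. -/
lemma mulVec_heckeRep (hd : HeckeData M bar coc) (γ : SL(2, ℤ))
    (x : (Unit × Delta M) → ℂ) (pt : Unit × Delta M) :
    (heckeRep M oneRep bar coc γ).mulVec x pt = x ((), bar pt.2 γ) := by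
  have hterm : ∀ q : Unit × Delta M,
      heckeRep M oneRep bar coc γ pt q * x q
        = if q = ((), bar pt.2 γ) then x q else 0 := by
    intro q
    show (if pt.2 = bar q.2 γ⁻¹ then oneRep ((coc q.2 γ⁻¹)⁻¹) pt.1 q.1 else 0) * x q = _
    by_cases hc : pt.2 = bar q.2 γ⁻¹
    · have hq : q = ((), bar pt.2 γ) := by
        have h2 : q.2 = bar pt.2 γ := by rw [hc, bar_cancel' hd]
        exact Prod.ext (Subsingleton.elim _ _) h2
      rw [if_pos hc, if_pos hq]
      show (1 : Matrix Unit Unit ℂ) pt.1 q.1 * x q = x q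
      rw [Subsingleton.elim pt.1 q.1, Matrix.one_apply_eq, one_mul]
    · have hq : q ≠ ((), bar pt.2 γ) := by
        intro hq
        apply hc
        rw [hq]
        show pt.2 = bar (bar pt.2 γ) γ⁻¹
        rw [bar_cancel hd]
      rw [if_neg hc, if_neg hq, zero_mul]
  show ∑ q : Unit × Delta M, heckeRep M oneRep bar coc γ pt q * x q = _
  rw [Finset.sum_congr rfl (fun q _ => hterm q),
    Finset.sum_ite_eq' Finset.univ (((), bar pt.2 γ) : Unit × Delta M) x,
    if_pos (Finset.mem_univ _)]

end HeckeDecompAux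

open VVMF

set_option maxHeartbeats 1000000 in
/-- For every positive integer `M` there is an isomorphism of
`SL₂(ℤ)`-representations `T_M 𝟙 ≅ ⊕_{a² ∣ M} Ind_{Γ₀(M/a²)} 𝟙`, where `a` runs over the
positive integers whose square divides `M` and each summand is the permutation
representation of `SL₂(ℤ)` on `ℂ[Γ₀(M/a²)\SL₂(ℤ)]` (with `γ·𝔢_β = 𝔢_{βγ⁻¹}`, i.e. acting
on functions by `(γ·φ)(c) = φ(c·γ)`). -/
theorem heckeRep_trivial_decomposition (M : ℕ) (hM : 0 < M)
    (bar : Delta M → SL(2, ℤ) → Delta M) (coc : Delta M → SL(2, ℤ) → SL(2, ℤ))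
    (hd : HeckeData M bar coc) :
    ∃ e : ((Unit × Delta M) → ℂ) ≃ₗ[ℂ]
        ((Σ a : {a : ℕ // 0 < a ∧ a * a ∣ M},
          Cos (Gamma0 (M / (a.1 * a.1)))) → ℂ),
      ∀ (γ : SL(2, ℤ)) (x : (Unit × Delta M) → ℂ),
        e ((heckeRep M oneRep bar coc γ).mulVec x) =
          fun p => e x ⟨p.1, cosMul (Gamma0 (M / (p.1.1 * p.1.1))) p.2 γ⟩ := by
  classical
  let φ : (Σ a : {a : ℕ // 0 < a ∧ a * a ∣ M}, Cos (Gamma0 (M / (a.1 * a.1)))) ≃ Delta M :=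
    Equiv.ofBijective _ ⟨HeckeDecompAux.Phi_inj hd hM, HeckeDecompAux.Phi_surj hd hM⟩
  let ψ : (Σ a : {a : ℕ // 0 < a ∧ a * a ∣ M}, Cos (Gamma0 (M / (a.1 * a.1))))
      ≃ (Unit × Delta M) :=
    { toFun := fun p => ((), HeckeDecompAux.Phi M hM bar coc hd p)
      invFun := fun q => φ.symm q.2
      left_inv := fun p => φ.symm_apply_apply p
      right_inv := fun q => by
        show ((), φ (φ.symm q.2)) = q
        rw [Equiv.apply_symm_apply] }
  refine ⟨LinearEquiv.funCongrLeft ℂ ℂ ψ, fun γ x => ?_⟩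
  funext p
  show (heckeRep M oneRep bar coc γ).mulVec x (ψ p) = x (ψ ⟨p.1, cosMul _ p.2 γ⟩)
  rw [HeckeDecompAux.mulVec_heckeRep hd]
  show x ((), bar (HeckeDecompAux.Phi M hM bar coc hd p) γ)
      = x ((), HeckeDecompAux.Phi M hM bar coc hd ⟨p.1, cosMul _ p.2 γ⟩)
  rw [HeckeDecompAux.Phi_cosMul hd hM]
end
end
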